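/- arXiv:2508.00276 — 4 statements merged into one kernel-verified Lean document; each statement's English description precedes it below -/
import Mathlib

section
/- Let k ≥ 3 be an integer, let C = ℓ_1 ∨ ⋯ ∨ ℓ_k be a clause of width k over k distinct variables x_1, …, x_k, and let α_start, α_end : {x_1,…,x_k} → {0,1} be satisfying assignments for C. Let γ : {x_1,…,x_k} → {0,1} be a uniformly random assignment and, conditioned on γ, let the reconfiguration sequence σ be uniformly distributed over 𝒜(α_start ↔ γ ↔ α_end). Then the probability that σ satisfies C is at least 1 - 1/(k-1) - 1/k. -/
/-- A literal is a variable together with a polarity (`true` = positive);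
a clause is a disjunction of literals, represented as the list of its literals
(its width is the length of this list). -/
abbrev Clause (V : Type) := List (V × Bool)

/-- An assignment satisfies a clause if it makes at least one literal true. -/
def satClause {V : Type} (α : V → Bool) (C : Clause V) : Bool :=
  C.any fun l => α l.1 == l.2

/-- The irredundant reconfiguration sequence from `α` towards `β` obtained by flipping the
variables listed in `l` one by one (each flip sets the variable to its value under `β`);
it starts at `α` and, if `l` enumerates all variables where `α` and `β` differ, ends at `β`. -/
def flipSeq {V : Type} [DecidableEq V] (α β : V → Bool) (l : List V) : List (V → Bool) :=
  l.scanl (fun g v => Function.update g v (β v)) α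

/-- The set of orderings of `α △ β` (the variables on which `α` and `β` differ);
these are in one-to-one correspondence with the irredundant reconfiguration sequences
`𝒜(α ↔ β)` from `α` to `β`, via `flipSeq`. -/
noncomputable def orders {V : Type} [Fintype V] [DecidableEq V] (α β : V → Bool) : Finset (List V) :=
  ((Finset.univ.filter fun v => α v ≠ β v).toList.permutations).toFinset

/-- The probability that a random reconfiguration sequence from `s` to `e`, uniformly
distributed over `𝒜(s ↔ γ ↔ e)` for a uniformly random assignment `γ` (equivalently, the
concatenation `σ₁ ∘ σ₂` of independent uniformly random irredundant sequences
`σ₁ ∼ 𝒜(s ↔ γ)` and `σ₂ ∼ 𝒜(γ ↔ e)`), satisfies the clause `C`, i.e. that every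
assignment in the sequence satisfies `C`. -/
noncomputable def probSatPair {k : ℕ} (C : Clause (Fin k)) (s e : Fin k → Bool) : ℝ :=
  (∑ γ : Fin k → Bool,
      (((orders s γ ×ˢ orders γ e).filter fun p =>
            (flipSeq s γ p.1 ++ flipSeq γ e p.2).all fun α => satClause α C).card : ℝ) /
        ((orders s γ ×ˢ orders γ e).card : ℝ)) / 2 ^ k

namespace Stmt1Aux
open Finset
variable {k : ℕ}


/-- the set of variables where `f` and `h` differ -/
noncomputable def Dset (f h : Fin k → Bool) : Finset (Fin k) :=
  Finset.univ.filter fun v => f v ≠ h v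

lemma mem_Dset {f h : Fin k → Bool} {v : Fin k} : v ∈ Dset f h ↔ f v ≠ h v := by
  simp [Dset]

/-- the unique falsifying assignment -/
def astar (C : Clause (Fin k)) : Fin k → Bool := fun v => if (v, true) ∈ C then false else true

lemma mem_unique {C : Clause (Fin k)} (hnd : (C.map Prod.fst).Nodup) {v : Fin k} {b b' : Bool}
    (h : (v, b) ∈ C) (h' : (v, b') ∈ C) : b = b' := by
  have := List.inj_on_of_nodup_map hnd h h' rfl
  exact congrArg Prod.snd this

lemma exists_mem {C : Clause (Fin k)} (hw : C.length = k) (hnd : (C.map Prod.fst).Nodup)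
    (v : Fin k) : ∃ b, (v, b) ∈ C := by
  have hcard : (C.map Prod.fst).toFinset.card = k := by
    rw [List.toFinset_card_of_nodup hnd, List.length_map, hw]
  have huniv : (C.map Prod.fst).toFinset = Finset.univ := by
    apply Finset.eq_univ_of_card
    simp [hcard]
  have : v ∈ (C.map Prod.fst).toFinset := by rw [huniv]; exact Finset.mem_univ v
  rw [List.mem_toFinset, List.mem_map] at this
  obtain ⟨p, hp, hpv⟩ := this
  exact ⟨p.2, by rw [← hpv]; exact hp⟩

lemma sat_iff {C : Clause (Fin k)} (hw : C.length = k) (hnd : (C.map Prod.fst).Nodup)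
    (α : Fin k → Bool) : satClause α C = true ↔ α ≠ astar C := by
  constructor
  · intro h heq
    rw [satClause, List.any_eq_true] at h
    obtain ⟨p, hp, hb⟩ := h
    rw [beq_iff_eq] at hb
    subst heq
    cases hb' : p.2
    · have : (p.1, true) ∉ C := by
        intro hmem
        have := mem_unique hnd hmem (show (p.1, false) ∈ C by rw [← hb']; exact hp)
        simp [hb'] at this
      simp [astar, this, hb'] at hb
    · have : (p.1, true) ∈ C := by rw [← hb']; exact hp
      simp [astar, this, hb'] at hb
  · intro h
    have : ∃ v, α v ≠ astar C v := by
      by_contra hc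
      push_neg at hc
      exact h (funext hc)
    obtain ⟨v, hv⟩ := this
    obtain ⟨b, hb⟩ := exists_mem hw hnd v
    rw [satClause, List.any_eq_true]
    refine ⟨(v, b), hb, ?_⟩
    rw [beq_iff_eq]
    cases b
    · have : (v, true) ∉ C := by
        intro hmem
        have := mem_unique hnd hmem hb
        simp at this
      simp only [astar, if_neg this] at hv
      simpa using hv
    · simp only [astar, if_pos hb] at hv
      simpa using hv


def applyFlips (f h : Fin k → Bool) (t : List (Fin k)) : Fin k → Bool :=
  t.foldl (fun g v => Function.update g v (h v)) f

lemma flipSeq_nil (f h : Fin k → Bool) : flipSeq f h [] = [f] := rfl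

lemma flipSeq_cons (f h : Fin k → Bool) (v : Fin k) (l : List (Fin k)) :
    flipSeq f h (v :: l) = f :: flipSeq (Function.update f v (h v)) h l := by
  simp only [flipSeq, List.scanl_cons]

lemma mem_flipSeq {f h x : Fin k → Bool} {l : List (Fin k)} :
    x ∈ flipSeq f h l ↔ ∃ n ≤ l.length, x = applyFlips f h (l.take n) := by
  induction l generalizing f with
  | nil =>
    simp only [flipSeq_nil, List.mem_singleton, List.length_nil]
    constructor
    · intro h'; exact ⟨0, le_refl 0, h'⟩
    · rintro ⟨n, hn, rfl⟩
      interval_cases n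
      rfl
  | cons v l ih =>
    rw [flipSeq_cons, List.mem_cons, ih]
    constructor
    · rintro (rfl | ⟨n, hn, rfl⟩)
      · exact ⟨0, Nat.zero_le _, rfl⟩
      · exact ⟨n + 1, by simpa using Nat.succ_le_succ hn, rfl⟩
    · rintro ⟨n, hn, rfl⟩
      match n with
      | 0 => left; rfl
      | n + 1 =>
        right
        exact ⟨n, Nat.le_of_succ_le_succ (by simpa using hn), rfl⟩

lemma applyFlips_apply (f h : Fin k → Bool) (t : List (Fin k)) (v : Fin k) :
    applyFlips f h t v = if v ∈ t then h v else f v := by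
  induction t generalizing f with
  | nil => simp [applyFlips]
  | cons a t ih =>
    show applyFlips (Function.update f a (h a)) h t v = _
    rw [ih]
    by_cases hvt : v ∈ t
    · simp [hvt]
    · by_cases hva : v = a
      · subst hva; simp [hvt]
      · simp [hvt, hva, Function.update_of_ne hva]

lemma mem_orders {f h : Fin k → Bool} {l : List (Fin k)} :
    l ∈ orders f h ↔ l.Perm (Dset f h).toList := by
  rw [orders, List.mem_toFinset, List.mem_permutations]
  rfl

lemma nodup_of_mem_orders {f h : Fin k → Bool} {l : List (Fin k)}
    (hl : l ∈ orders f h) : l.Nodup :=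
  (mem_orders.1 hl).nodup_iff.2 (Finset.nodup_toList _)

lemma toFinset_of_mem_orders {f h : Fin k → Bool} {l : List (Fin k)}
    (hl : l ∈ orders f h) : l.toFinset = Dset f h := by
  rw [List.toFinset_eq_of_perm _ _ (mem_orders.1 hl), Finset.toList_toFinset]

lemma length_of_mem_orders {f h : Fin k → Bool} {l : List (Fin k)}
    (hl : l ∈ orders f h) : l.length = (Dset f h).card := by
  rw [(mem_orders.1 hl).length_eq, Finset.length_toList]

lemma card_orders (f h : Fin k → Bool) : (orders f h).card = Nat.factorial (Dset f h).card := by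
  rw [orders, List.toFinset_card_of_nodup (List.nodup_permutations _ (Finset.nodup_toList _)),
    List.length_permutations, Finset.length_toList]
  rfl

lemma orders_nonempty (f h : Fin k → Bool) : 0 < (orders f h).card := by
  rw [card_orders]; exact Nat.factorial_pos _

/-- characterize membership of `x` in a flip sequence given by an order. -/
lemma take_char {f h x : Fin k → Bool} {l : List (Fin k)}
    (hl : l ∈ orders f h) (hx : x ∈ flipSeq f h l) :
    ∃ n ≤ l.length, ∀ v, x v = if v ∈ l.take n then h v else f v := by
  obtain ⟨n, hn, rfl⟩ := mem_flipSeq.1 hx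
  exact ⟨n, hn, fun v => applyFlips_apply f h _ v⟩


lemma card_badOrders_le (f h x : Fin k → Bool) (B : Finset (Fin k))
    (hchar : ∀ l ∈ orders f h, x ∈ flipSeq f h l → (l.take B.card).toFinset = B) :
    ((orders f h).filter (fun l => x ∈ flipSeq f h l)).card ≤
      Nat.factorial B.card * Nat.factorial ((Dset f h).card - B.card) := by
  set S := (orders f h).filter (fun l => x ∈ flipSeq f h l) with hSdef
  rcases S.eq_empty_or_nonempty with hE | ⟨l₀, hl₀⟩
  · rw [hE]; simp
  have hl₀o : l₀ ∈ orders f h := (Finset.mem_filter.1 hl₀).1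
  have hl₀x : x ∈ flipSeq f h l₀ := by
    have := (Finset.mem_filter.1 hl₀).2; simpa using this
  have hBD : B ⊆ Dset f h := by
    rw [← hchar l₀ hl₀o hl₀x, ← toFinset_of_mem_orders hl₀o]
    intro v hv
    rw [List.mem_toFinset] at hv ⊢
    exact List.take_subset _ _ hv
  set T := ((B.toList.permutations).toFinset ×ˢ
      (((Dset f h) \ B).toList.permutations).toFinset : Finset (List (Fin k) × List (Fin k)))
    with hTdef
  have hTcard : T.card = Nat.factorial B.card * Nat.factorial ((Dset f h).card - B.card) := by
    rw [hTdef, Finset.card_product,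
      List.toFinset_card_of_nodup (List.nodup_permutations _ (Finset.nodup_toList _)),
      List.toFinset_card_of_nodup (List.nodup_permutations _ (Finset.nodup_toList _)),
      List.length_permutations, List.length_permutations, Finset.length_toList,
      Finset.length_toList, Finset.card_sdiff_of_subset hBD]
  rw [← hTcard]
  apply Finset.card_le_card_of_injOn (fun l => (l.take B.card, l.drop B.card))
  · intro l hl
    have hlo : l ∈ orders f h := (Finset.mem_filter.1 hl).1
    have hlx : x ∈ flipSeq f h l := by have := (Finset.mem_filter.1 hl).2; simpa using this
    have hnd : l.Nodup := nodup_of_mem_orders hlo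
    have htake : (l.take B.card).toFinset = B := hchar l hlo hlx
    have hndt : (l.take B.card).Nodup := hnd.sublist (List.take_sublist _ _)
    have hndd : (l.drop B.card).Nodup := hnd.sublist (List.drop_sublist _ _)
    have hdropt : (l.drop B.card).toFinset = Dset f h \ B := by
      ext v
      rw [List.mem_toFinset, Finset.mem_sdiff]
      constructor
      · intro hv
        have hvl : v ∈ l := List.drop_subset _ _ hv
        refine ⟨by rw [← toFinset_of_mem_orders hlo, List.mem_toFinset]; exact hvl,
          fun hvB => ?_⟩
        have hvt : v ∈ l.take B.card := by rw [← htake, List.mem_toFinset] at hvB; exact hvB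
        have hnd2 : (l.take B.card ++ l.drop B.card).Nodup := by
          rw [List.take_append_drop]; exact hnd
        exact (List.disjoint_of_nodup_append hnd2) hvt hv
      · rintro ⟨hvD, hvB⟩
        have hvl : v ∈ l := by
          rw [← toFinset_of_mem_orders hlo, List.mem_toFinset] at hvD; exact hvD
        have hvl2 : v ∈ l.take B.card ++ l.drop B.card := by
          rw [List.take_append_drop]; exact hvl
        rcases List.mem_append.1 hvl2 with h' | h'
        · exact absurd (by rw [← htake]; exact List.mem_toFinset.2 h') hvB
        · exact h'
    rw [hTdef, Finset.mem_coe, Finset.mem_product, List.mem_toFinset, List.mem_toFinset]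
    constructor
    · exact List.mem_permutations.2 (List.perm_of_nodup_nodup_toFinset_eq hndt
        (Finset.nodup_toList _) (by rw [htake, Finset.toList_toFinset]))
    · exact List.mem_permutations.2 (List.perm_of_nodup_nodup_toFinset_eq hndd
        (Finset.nodup_toList _) (by rw [hdropt, Finset.toList_toFinset]))
  · intro l1 h1 l2 h2 heq
    have e1 := congrArg Prod.fst heq
    have e2 := congrArg Prod.snd heq
    simp only at e1 e2
    rw [← List.take_append_drop B.card l1, ← List.take_append_drop B.card l2, e1, e2]


lemma case1_char {s γ x : Fin k → Bool} {l : List (Fin k)}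
    (hl : l ∈ orders s γ) (hx : x ∈ flipSeq s γ l) :
    (∀ v ∈ Dset s x, γ v = x v) ∧ (l.take (Dset s x).card).toFinset = Dset s x := by
  obtain ⟨n, hn, hv⟩ := take_char hl hx
  have hlD : l.toFinset = Dset s γ := toFinset_of_mem_orders hl
  have hndl : l.Nodup := nodup_of_mem_orders hl
  have ht : (l.take n).toFinset = Dset s x := by
    ext v
    rw [List.mem_toFinset, mem_Dset]
    constructor
    · intro hvt
      have hvl : v ∈ l := List.take_subset _ _ hvt
      have hvD : s v ≠ γ v := mem_Dset.1 (by rw [← hlD]; exact List.mem_toFinset.2 hvl)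
      have := hv v
      rw [if_pos hvt] at this
      rw [this]; exact hvD
    · intro hsx
      by_contra hvt
      have := hv v
      rw [if_neg hvt] at this
      exact hsx this.symm
  have hcond : ∀ v ∈ Dset s x, γ v = x v := by
    intro v hvA
    have hvt : v ∈ l.take n := by rw [← ht] at hvA; exact List.mem_toFinset.1 hvA
    have := hv v
    rw [if_pos hvt] at this
    exact this.symm
  have hlen : n = (Dset s x).card := by
    rw [← ht, List.toFinset_card_of_nodup (hndl.sublist (List.take_sublist _ _)),
      List.length_take, min_eq_left hn]
  refine ⟨hcond, ?_⟩
  rw [← hlen]; exact ht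

lemma case2_char {γ e x : Fin k → Bool} {l : List (Fin k)}
    (hl : l ∈ orders γ e) (hx : x ∈ flipSeq γ e l) :
    (∀ v ∈ Dset e x, γ v = x v) ∧ (l.take (Dset γ x).card).toFinset = Dset γ x := by
  obtain ⟨n, hn, hv⟩ := take_char hl hx
  have hlD : l.toFinset = Dset γ e := toFinset_of_mem_orders hl
  have hndl : l.Nodup := nodup_of_mem_orders hl
  have ht : (l.take n).toFinset = Dset γ x := by
    ext v
    rw [List.mem_toFinset, mem_Dset]
    constructor
    · intro hvt
      have hvl : v ∈ l := List.take_subset _ _ hvt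
      have hvD : γ v ≠ e v := mem_Dset.1 (by rw [← hlD]; exact List.mem_toFinset.2 hvl)
      have := hv v
      rw [if_pos hvt] at this
      rw [this]; exact hvD
    · intro hgx
      by_contra hvt
      have := hv v
      rw [if_neg hvt] at this
      exact hgx this.symm
  have hcond : ∀ v ∈ Dset e x, γ v = x v := by
    intro v hvA
    have hex : e v ≠ x v := mem_Dset.1 hvA
    have hvt : v ∉ l.take n := by
      intro hvt
      have := hv v
      rw [if_pos hvt] at this
      exact hex this.symm
    have := hv v
    rw [if_neg hvt] at this
    exact this.symm
  have hlen : n = (Dset γ x).card := by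
    rw [← ht, List.toFinset_card_of_nodup (hndl.sublist (List.take_sublist _ _)),
      List.length_take, min_eq_left hn]
  refine ⟨hcond, ?_⟩
  rw [← hlen]; exact ht

lemma factratio {a d : ℕ} (had : a ≤ d) :
    ((Nat.factorial a : ℝ) * Nat.factorial (d - a)) / Nat.factorial d =
      1 / (Nat.choose d a) := by
  have key : Nat.choose d a * Nat.factorial a * Nat.factorial (d - a) = Nat.factorial d :=
    Nat.choose_mul_factorial_mul_factorial had
  rw [div_eq_div_iff (by exact_mod_cast (Nat.factorial_pos d).ne')
    (by exact_mod_cast (Nat.choose_pos had).ne'), one_mul]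
  rw [← key]
  push_cast
  ring

lemma ratio1 {C : Clause (Fin k)} (s γ : Fin k → Bool) :
    (((orders s γ).filter fun l => astar C ∈ flipSeq s γ l).card : ℝ) / ((orders s γ).card : ℝ)
      ≤ if (∀ v ∈ Dset s (astar C), γ v = astar C v)
        then (1 : ℝ) / ((Nat.choose ((Dset s (astar C)).card +
            (univ.filter fun v => v ∉ Dset s (astar C) ∧ γ v ≠ s v).card) (Dset s (astar C)).card : ℕ) : ℝ)
        else 0 := by
  set x := astar C
  set A := Dset s x with hA
  by_cases hcond : ∀ v ∈ A, γ v = x v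
  · rw [if_pos hcond]
    have hsplit : Dset s γ = A ∪ (univ.filter fun v => v ∉ A ∧ γ v ≠ s v) := by
      ext v
      simp only [mem_Dset, Finset.mem_union, Finset.mem_filter, Finset.mem_univ, true_and]
      constructor
      · intro hsg
        by_cases hvA : v ∈ A
        · exact Or.inl hvA
        · exact Or.inr ⟨hvA, fun hgs => hsg hgs.symm⟩
      · rintro (hvA | ⟨_, hgs⟩)
        · rw [hcond v hvA]; exact mem_Dset.1 hvA
        · exact fun hsg => hgs hsg.symm
    have hdisj : Disjoint A (univ.filter fun v => v ∉ A ∧ γ v ≠ s v) := by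
      rw [Finset.disjoint_left]
      intro v hvA hvf
      exact (Finset.mem_filter.1 hvf).2.1 hvA
    have hcard : (Dset s γ).card = A.card +
        (univ.filter fun v => v ∉ A ∧ γ v ≠ s v).card := by
      rw [hsplit, Finset.card_union_of_disjoint hdisj]
    have hbound := card_badOrders_le s γ x A (fun l hl hx => (case1_char hl hx).2)
    have haD : A.card ≤ (Dset s γ).card := by rw [hcard]; exact Nat.le_add_right _ _
    calc (((orders s γ).filter fun l => x ∈ flipSeq s γ l).card : ℝ) / ((orders s γ).card : ℝ)
        ≤ ((Nat.factorial A.card * Nat.factorial ((Dset s γ).card - A.card) : ℕ) : ℝ) /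
            ((orders s γ).card : ℝ) := by
          have hpos : (0:ℝ) < ((orders s γ).card : ℝ) := by
            exact_mod_cast orders_nonempty s γ
          gcongr
      _ = (1 : ℝ) / ((Nat.choose ((Dset s γ).card) A.card : ℕ) : ℝ) := by
          rw [card_orders]
          push_cast
          exact factratio haD
      _ = _ := by rw [hcard]
  · rw [if_neg hcond]
    have : (orders s γ).filter (fun l => x ∈ flipSeq s γ l) = ∅ := by
      rw [Finset.filter_eq_empty_iff]
      intro l hl hx
      exact hcond (case1_char hl hx).1
    rw [this]
    simp


lemma ratio2 {C : Clause (Fin k)} (e γ : Fin k → Bool) :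
    (((orders γ e).filter fun l => astar C ∈ flipSeq γ e l).card : ℝ) / ((orders γ e).card : ℝ)
      ≤ if (∀ v ∈ Dset e (astar C), γ v = astar C v)
        then (1 : ℝ) / ((Nat.choose ((Dset e (astar C)).card +
            (univ.filter fun v => v ∉ Dset e (astar C) ∧ γ v ≠ astar C v).card)
            (Dset e (astar C)).card : ℕ) : ℝ)
        else 0 := by
  set x := astar C
  set A := Dset e x with hA
  by_cases hcond : ∀ v ∈ A, γ v = x v
  · rw [if_pos hcond]
    set G := (univ.filter fun v => v ∉ A ∧ γ v ≠ x v) with hG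
    have hBG : Dset γ x = G := by
      ext v
      simp only [mem_Dset, hG, Finset.mem_filter, Finset.mem_univ, true_and]
      constructor
      · intro hgx
        refine ⟨fun hvA => hgx (hcond v hvA), hgx⟩
      · exact fun h => h.2
    have hsplit : Dset γ e = A ∪ G := by
      ext v
      simp only [mem_Dset, hG, Finset.mem_union, Finset.mem_filter, Finset.mem_univ, true_and]
      constructor
      · intro hge
        by_cases hvA : v ∈ A
        · exact Or.inl hvA
        · refine Or.inr ⟨hvA, fun hgx => ?_⟩
          have hex : e v = x v := by
            by_contra hex
            exact hvA (mem_Dset.2 hex)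
          exact hge (by rw [hex, hgx])
      · rintro (hvA | ⟨hvA, hgx⟩)
        · rw [hcond v hvA]
          exact fun hxe => (mem_Dset.1 hvA) hxe.symm
        · have hex : e v = x v := by
            by_contra hex
            exact hvA (mem_Dset.2 hex)
          rw [hex]
          exact hgx
    have hdisj : Disjoint A G := by
      rw [Finset.disjoint_left]
      intro v hvA hvG
      exact (Finset.mem_filter.1 hvG).2.1 hvA
    have hcard : (Dset γ e).card = A.card + G.card := by
      rw [hsplit, Finset.card_union_of_disjoint hdisj]
    have hbound := card_badOrders_le γ e x (Dset γ x) (fun l hl hx => (case2_char hl hx).2)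
    rw [hBG] at hbound
    have hsub : (Dset γ e).card - G.card = A.card := by omega
    rw [hsub] at hbound
    have hgD : G.card ≤ (Dset γ e).card := by omega
    have haD : A.card ≤ (Dset γ e).card := by omega
    calc (((orders γ e).filter fun l => x ∈ flipSeq γ e l).card : ℝ) / ((orders γ e).card : ℝ)
        ≤ ((Nat.factorial G.card * Nat.factorial A.card : ℕ) : ℝ) /
            ((orders γ e).card : ℝ) := by
          have hpos : (0:ℝ) < ((orders γ e).card : ℝ) := by
            exact_mod_cast orders_nonempty γ e
          gcongr
      _ = (1 : ℝ) / ((Nat.choose ((Dset γ e).card) A.card : ℕ) : ℝ) := by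
          rw [card_orders]
          push_cast
          rw [mul_comm]
          have : (Dset γ e).card - A.card = G.card := by omega
          rw [← this]
          exact factratio haD
      _ = _ := by rw [hcard]
  · rw [if_neg hcond]
    have hEmpty : (orders γ e).filter (fun l => x ∈ flipSeq γ e l) = ∅ := by
      rw [Finset.filter_eq_empty_iff]
      intro l hl hx
      exact hcond (case2_char hl hx).1
    rw [hEmpty]
    simp

lemma k_le_choose (n a : ℕ) (h1 : 1 ≤ a) (h2 : a ≤ n - 1) : n ≤ n.choose a := by
  induction n with
  | zero => omega
  | succ m ih =>
    rcases Nat.lt_or_ge a m with hlt | hge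
    · -- a ≤ m - 1
      obtain ⟨a', rfl⟩ : ∃ a', a = a' + 1 := ⟨a - 1, by omega⟩
      rw [Nat.choose_succ_succ]
      simp only [Nat.succ_eq_add_one]
      have h3 : m ≤ m.choose (a' + 1) := ih (by omega)
      have h4 : 1 ≤ m.choose a' := Nat.choose_pos (by omega)
      omega
    · have ha : a = m := by omega
      subst ha
      rw [Nat.choose_succ_self_right]

lemma nat_bound (hk3 : 3 ≤ k) (a : ℕ) (ha : 1 ≤ a) (hak : a ≤ k) :
    (∑ j ∈ Finset.range (k - a + 1), k.choose (a + j)) * k ≤ k.choose a * 2 ^ k := by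
  rcases Nat.lt_or_ge a k with hlt | hge
  · have hsum : (∑ j ∈ Finset.range (k - a + 1), k.choose (a + j)) ≤ 2 ^ k := by
      have h1 : (∑ j ∈ Finset.range (k - a + 1), k.choose (a + j)) =
          ∑ m ∈ Finset.Ico a (k + 1), k.choose m := by
        rw [Finset.sum_Ico_eq_sum_range]
        have hx : k + 1 - a = k - a + 1 := by omega
        rw [hx]
      rw [h1, ← Nat.sum_range_choose k]
      apply Finset.sum_le_sum_of_subset
      intro m hm
      rw [Finset.mem_Ico] at hm
      rw [Finset.mem_range]
      omega
    calc (∑ j ∈ Finset.range (k - a + 1), k.choose (a + j)) * k ≤ 2 ^ k * k := by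
          exact Nat.mul_le_mul_right _ hsum
      _ ≤ 2 ^ k * k.choose a := Nat.mul_le_mul_left _ (k_le_choose k a ha (by omega))
      _ = k.choose a * 2 ^ k := Nat.mul_comm _ _
  · have ha' : a = k := by omega
    subst ha'
    simp [Nat.choose_self]
    calc a ≤ 2 ^ a := (Nat.lt_two_pow_self (n := a)).le
    

lemma sum_le (hk3 : 3 ≤ k) (A : Finset (Fin k)) (hA : A.Nonempty) (τ ρ : Fin k → Bool) :
    ∑ γ : Fin k → Bool, (if (∀ v ∈ A, γ v = τ v)
        then (1:ℝ) / ((Nat.choose (A.card +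
            (univ.filter fun v => v ∉ A ∧ γ v ≠ ρ v).card) A.card : ℕ) : ℝ)
        else 0)
      ≤ 2 ^ k / k := by
  have ha1 : 1 ≤ A.card := Finset.card_pos.2 hA
  have hak : A.card ≤ k := by
    have := Finset.card_le_univ A
    simpa using this
  rw [← Finset.sum_filter]
  have hbij : ∑ γ ∈ Finset.univ.filter (fun γ : Fin k → Bool => ∀ v ∈ A, γ v = τ v),
        (1:ℝ) / ((Nat.choose (A.card +
            (univ.filter fun v => v ∉ A ∧ γ v ≠ ρ v).card) A.card : ℕ) : ℝ)
      = ∑ T ∈ (Finset.univ \ A).powerset,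
        (1:ℝ) / ((Nat.choose (A.card + T.card) A.card : ℕ) : ℝ) := by
    apply Finset.sum_nbij' (fun γ => Finset.univ.filter (fun v => v ∉ A ∧ γ v ≠ ρ v))
      (fun T => fun v => if v ∈ A then τ v else (if v ∈ T then !ρ v else ρ v))
    · intro γ _
      rw [Finset.mem_powerset]
      intro v hv
      rw [Finset.mem_filter] at hv
      rw [Finset.mem_sdiff]
      exact ⟨Finset.mem_univ v, hv.2.1⟩
    · intro T _
      rw [Finset.mem_filter]
      refine ⟨Finset.mem_univ _, fun v hv => ?_⟩
      simp only [if_pos hv]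
    · intro γ hγ
      rw [Finset.mem_filter] at hγ
      funext v
      by_cases hvA : v ∈ A
      · simp only [if_pos hvA, hγ.2 v hvA]
      · simp only [if_neg hvA]
        by_cases hvf : v ∈ Finset.univ.filter (fun v => v ∉ A ∧ γ v ≠ ρ v)
        · simp only [if_pos hvf]
          have := (Finset.mem_filter.1 hvf).2.2
          cases hb : γ v <;> cases hc : ρ v <;> simp_all
        · simp only [if_neg hvf]
          by_contra hne
          exact hvf (Finset.mem_filter.2 ⟨Finset.mem_univ _, hvA, fun h => hne h.symm⟩)
    · intro T hT
      rw [Finset.mem_powerset] at hT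
      ext v
      rw [Finset.mem_filter]
      constructor
      · rintro ⟨-, hvA, hne⟩
        simp only [if_neg hvA] at hne
        by_contra hvT
        rw [if_neg hvT] at hne
        exact hne rfl
      · intro hvT
        have hvA : v ∉ A := (Finset.mem_sdiff.1 (hT hvT)).2
        refine ⟨Finset.mem_univ _, hvA, ?_⟩
        simp only [if_neg hvA, if_pos hvT]
        simp
    · intro γ _
      rfl
  rw [hbij]
  have hgrp := Finset.sum_powerset_apply_card
    (fun m => (1:ℝ) / ((Nat.choose (A.card + m) A.card : ℕ) : ℝ)) (x := Finset.univ \ A)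
  rw [hgrp, Finset.card_univ_diff, Fintype.card_fin]
  have hterm : ∀ j ∈ Finset.range (k - A.card + 1),
      (k - A.card).choose j • ((1:ℝ) / ((Nat.choose (A.card + j) A.card : ℕ) : ℝ))
        = ((k.choose (A.card + j) : ℕ) : ℝ) / ((k.choose A.card : ℕ) : ℝ) := by
    intro j hj
    rw [Finset.mem_range] at hj
    have hajk : A.card + j ≤ k := by omega
    have hid : k.choose (A.card + j) * (A.card + j).choose A.card
        = k.choose A.card * (k - A.card).choose j := by
      have := Nat.choose_mul (n := k) (k := A.card + j) (s := A.card) (Nat.le_add_right _ _)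
      simpa using this
    rw [nsmul_eq_mul, mul_one_div,
      div_eq_div_iff (by exact_mod_cast (Nat.choose_pos (Nat.le_add_right _ _)).ne')
        (by exact_mod_cast (Nat.choose_pos hak).ne')]
    have hgoal : ((k - A.card).choose j) * (k.choose A.card)
        = k.choose (A.card + j) * ((A.card + j).choose A.card) := by
      rw [hid]; ring
    exact_mod_cast hgoal
  rw [Finset.sum_congr rfl hterm, ← Finset.sum_div]
  have hkpos : (0:ℝ) < (k:ℝ) := by
    have : 0 < k := by omega
    exact_mod_cast this
  have hcpos : (0:ℝ) < ((k.choose A.card : ℕ) : ℝ) := by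
    exact_mod_cast Nat.choose_pos hak
  rw [div_le_div_iff₀ hcpos hkpos]
  have hnb := nat_bound hk3 A.card ha1 hak
  calc (∑ j ∈ Finset.range (k - A.card + 1), ((k.choose (A.card + j) : ℕ) : ℝ)) * (k:ℝ)
      = (((∑ j ∈ Finset.range (k - A.card + 1), k.choose (A.card + j)) * k : ℕ) : ℝ) := by
        push_cast; ring
    _ ≤ ((k.choose A.card * 2 ^ k : ℕ) : ℝ) := by exact_mod_cast hnb
    _ = 2 ^ k * ((k.choose A.card : ℕ) : ℝ) := by push_cast; ring

lemma dset_nonempty {f x : Fin k → Bool} (h : f ≠ x) : (Dset f x).Nonempty := by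
  rw [Finset.nonempty_iff_ne_empty]
  intro hE
  apply h
  funext v
  by_contra hv
  have : v ∈ Dset f x := mem_Dset.2 hv
  rw [hE] at this
  exact absurd this (Finset.notMem_empty v)

lemma per_gamma {C : Clause (Fin k)} (hw : C.length = k) (hnd : (C.map Prod.fst).Nodup)
    (s e γ : Fin k → Bool) :
    1 - (((orders s γ).filter fun l => astar C ∈ flipSeq s γ l).card : ℝ) /
          ((orders s γ).card : ℝ)
      - (((orders γ e).filter fun l => astar C ∈ flipSeq γ e l).card : ℝ) /
          ((orders γ e).card : ℝ)
    ≤ (((orders s γ ×ˢ orders γ e).filter fun p =>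
          (flipSeq s γ p.1 ++ flipSeq γ e p.2).all fun α => satClause α C).card : ℝ) /
        ((orders s γ ×ˢ orders γ e).card : ℝ) := by
  set x := astar C with hx
  set o1 := orders s γ
  set o2 := orders γ e
  set F := (o1 ×ˢ o2).filter fun p =>
    (flipSeq s γ p.1 ++ flipSeq γ e p.2).all fun α => satClause α C with hF
  set bad1 := o1.filter fun l => x ∈ flipSeq s γ l with hb1
  set bad2 := o2.filter fun l => x ∈ flipSeq γ e l with hb2
  have hsub : (o1 ×ˢ o2) \ F ⊆ (bad1 ×ˢ o2) ∪ (o1 ×ˢ bad2) := by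
    intro p hp
    rw [Finset.mem_sdiff] at hp
    obtain ⟨hpp, hpF⟩ := hp
    have hp1 : p.1 ∈ o1 := (Finset.mem_product.1 hpp).1
    have hp2 : p.2 ∈ o2 := (Finset.mem_product.1 hpp).2
    have hnall : ¬ ((flipSeq s γ p.1 ++ flipSeq γ e p.2).all fun α => satClause α C) = true := by
      intro hall
      exact hpF (Finset.mem_filter.2 ⟨hpp, hall⟩)
    rw [List.all_eq_true] at hnall
    push_neg at hnall
    obtain ⟨α, hα, hαs⟩ := hnall
    have hαx : α = x := by
      by_contra hne
      exact hαs ((sat_iff hw hnd α).2 hne)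
    subst hαx
    rcases List.mem_append.1 hα with h' | h'
    · exact Finset.mem_union_left _ (Finset.mem_product.2
        ⟨Finset.mem_filter.2 ⟨hp1, h'⟩, hp2⟩)
    · exact Finset.mem_union_right _ (Finset.mem_product.2
        ⟨hp1, Finset.mem_filter.2 ⟨hp2, h'⟩⟩)
  have hnat : (o1 ×ˢ o2).card ≤ F.card + (bad1.card * o2.card + o1.card * bad2.card) := by
    have h1 : ((o1 ×ˢ o2) \ F).card = (o1 ×ˢ o2).card - F.card :=
      Finset.card_sdiff_of_subset (Finset.filter_subset _ _)
    have h2 : ((o1 ×ˢ o2) \ F).card ≤ (bad1 ×ˢ o2).card + (o1 ×ˢ bad2).card :=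
      le_trans (Finset.card_le_card hsub) (Finset.card_union_le _ _)
    have h3 : F.card ≤ (o1 ×ˢ o2).card := Finset.card_le_card (Finset.filter_subset _ _)
    rw [Finset.card_product, Finset.card_product] at h2
    omega
  have hn1 : (0:ℝ) < (o1.card : ℝ) := by exact_mod_cast orders_nonempty s γ
  have hn2 : (0:ℝ) < (o2.card : ℝ) := by exact_mod_cast orders_nonempty γ e
  have hprod : ((o1 ×ˢ o2).card : ℝ) = (o1.card : ℝ) * (o2.card : ℝ) := by
    rw [Finset.card_product]; push_cast; ring
  rw [hprod, le_div_iff₀ (mul_pos hn1 hn2)]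
  have hexp : (1 - (bad1.card : ℝ) / (o1.card : ℝ) - (bad2.card : ℝ) / (o2.card : ℝ)) *
      ((o1.card : ℝ) * (o2.card : ℝ))
      = (o1.card : ℝ) * (o2.card : ℝ) - (bad1.card : ℝ) * (o2.card : ℝ)
        - (o1.card : ℝ) * (bad2.card : ℝ) := by
    field_simp
  rw [hexp]
  have hnatR : ((o1.card : ℝ) * (o2.card : ℝ)) ≤ (F.card : ℝ) +
      ((bad1.card : ℝ) * (o2.card : ℝ) + (o1.card : ℝ) * (bad2.card : ℝ)) := by
    have := hnat
    rw [Finset.card_product] at this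
    exact_mod_cast this
  linarith


end Stmt1Aux

open Stmt1Aux Finset

/-- Let `k ≥ 3`, let `C` be a clause of width `k` over `k` distinct
variables, and let `s`, `e` be satisfying assignments for `C`. Draw a uniformly random
assignment `γ` and, conditioned on `γ`, a uniformly random reconfiguration sequence `σ` from
`𝒜(s ↔ γ ↔ e)`. Then the probability that `σ` satisfies `C` is at least
`1 - 1/(k-1) - 1/k`. -/
theorem stmt1 {k : ℕ} (hk : 3 ≤ k) (C : Clause (Fin k))
    (hw : C.length = k) (hnd : (C.map Prod.fst).Nodup)
    (s e : Fin k → Bool) (hs : satClause s C) (he : satClause e C) :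
    1 - 1 / ((k : ℝ) - 1) - 1 / (k : ℝ) ≤ probSatPair C s e := by
  classical
  set x := astar C with hx
  have hA1 : (Dset s x).Nonempty := dset_nonempty ((sat_iff hw hnd s).1 hs)
  have hA2 : (Dset e x).Nonempty := dset_nonempty ((sat_iff hw hnd e).1 he)
  have hS1 := sum_le hk (Dset s x) hA1 x s
  have hS2 := sum_le hk (Dset e x) hA2 x x
  have hkR : (3:ℝ) ≤ (k:ℝ) := by exact_mod_cast hk
  have h2k : (0:ℝ) < 2 ^ k := by positivity
  have hkpos : (0:ℝ) < (k:ℝ) := by linarith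
  -- pointwise bound, summed
  have hmain : (2:ℝ)^k - 2^k/k - 2^k/k ≤
      ∑ γ : Fin k → Bool,
        (((orders s γ ×ˢ orders γ e).filter fun p =>
            (flipSeq s γ p.1 ++ flipSeq γ e p.2).all fun α => satClause α C).card : ℝ) /
          ((orders s γ ×ˢ orders γ e).card : ℝ) := by
    have hpt : ∀ γ : Fin k → Bool,
        1 - (if (∀ v ∈ Dset s x, γ v = x v)
              then (1:ℝ) / ((Nat.choose ((Dset s x).card +
                  (univ.filter fun v => v ∉ Dset s x ∧ γ v ≠ s v).card) (Dset s x).card : ℕ) : ℝ)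
              else 0)
          - (if (∀ v ∈ Dset e x, γ v = x v)
              then (1:ℝ) / ((Nat.choose ((Dset e x).card +
                  (univ.filter fun v => v ∉ Dset e x ∧ γ v ≠ x v).card) (Dset e x).card : ℕ) : ℝ)
              else 0)
        ≤ (((orders s γ ×ˢ orders γ e).filter fun p =>
              (flipSeq s γ p.1 ++ flipSeq γ e p.2).all fun α => satClause α C).card : ℝ) /
            ((orders s γ ×ˢ orders γ e).card : ℝ) := by
      intro γ
      have hr1 := ratio1 (C := C) s γ
      have hr2 := ratio2 (C := C) e γ
      have hpg := per_gamma hw hnd s e γ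
      rw [← hx] at hr1 hr2
      linarith
    calc (2:ℝ)^k - 2^k/k - 2^k/k
        ≤ ∑ γ : Fin k → Bool, (1 - (if (∀ v ∈ Dset s x, γ v = x v)
              then (1:ℝ) / ((Nat.choose ((Dset s x).card +
                  (univ.filter fun v => v ∉ Dset s x ∧ γ v ≠ s v).card) (Dset s x).card : ℕ) : ℝ)
              else 0)
          - (if (∀ v ∈ Dset e x, γ v = x v)
              then (1:ℝ) / ((Nat.choose ((Dset e x).card +
                  (univ.filter fun v => v ∉ Dset e x ∧ γ v ≠ x v).card) (Dset e x).card : ℕ) : ℝ)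
              else 0)) := by
          rw [Finset.sum_sub_distrib, Finset.sum_sub_distrib, Finset.sum_const,
            Finset.card_univ, Fintype.card_fun, Fintype.card_bool, Fintype.card_fin,
            nsmul_eq_mul, mul_one]
          push_cast at hS1 hS2 ⊢
          linarith [hS1, hS2]
      _ ≤ _ := Finset.sum_le_sum (fun γ _ => hpt γ)
  have hk1 : (0:ℝ) < (k:ℝ) - 1 := by linarith
  have hmono : 1/(k:ℝ) ≤ 1/((k:ℝ)-1) := by
    apply one_div_le_one_div_of_le hk1
    linarith
  have step2 : (1:ℝ) - 1/k - 1/k ≤ probSatPair C s e := by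
    rw [probSatPair, le_div_iff₀ h2k]
    have hexp : ((1:ℝ) - 1/k - 1/k) * 2^k = 2^k - 2^k/k - 2^k/k := by
      field_simp
    rw [hexp]
    exact hmain
  linarith
end

section
/- Let C = ℓ_1 ∨ ⋯ ∨ ℓ_k be a clause of width k ≥ 3 over k distinct variables V = {x_1, …, x_k}, and let α_start, α_end, α'_start, α'_end : V → {0,1} be satisfying assignments for C such that for each literal ℓ_i of C, α_start(ℓ_i) ≤ α'_start(ℓ_i) and α_end(ℓ_i) ≤ α'_end(ℓ_i) (where α(ℓ) denotes the truth value of literal ℓ under α). Let γ : V → {0,1} be a uniformly random assignment and, conditioned on γ, let σ_1 ∼ 𝒜(α_start ↔ γ), σ_2 ∼ 𝒜(γ ↔ α_end), σ'_1 ∼ 𝒜(α'_start ↔ γ), σ'_2 ∼ 𝒜(γ ↔ α'_end) be independent uniformly random irredundant reconfiguration sequences. Then P[σ_1 ∘ σ_2 satisfies C] ≤ P[σ'_1 ∘ σ'_2 satisfies C]. -/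
namespace Stmt2Aux

open List Finset

private lemma bool3 {x y z : Bool} (h1 : x ≠ y) (h2 : y ≠ z) : x = z := by
  revert h1 h2; revert x y z; decide

private lemma mem_scanl {α β : Type*} (f : β → α → β) (b : β) (l : List α) (x : β) :
    x ∈ l.scanl f b ↔ ∃ n, x = (l.take n).foldl f b := by
  induction l generalizing b with
  | nil =>
    simp only [List.scanl_nil, List.mem_singleton, List.take_nil, List.foldl_nil]
    exact ⟨fun h => ⟨0, h⟩, fun ⟨n, h⟩ => h⟩
  | cons a l ih =>
    rw [List.scanl_cons, List.mem_cons]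
    simp only [ih]
    constructor
    · rintro (rfl | ⟨n, rfl⟩)
      · exact ⟨0, by simp⟩
      · exact ⟨n + 1, by simp⟩
    · rintro ⟨n, rfl⟩
      cases n with
      | zero => left; simp
      | succ n => right; exact ⟨n, by simp⟩

variable {k : ℕ}

private lemma foldl_update (b : Fin k → Bool) (m : List (Fin k)) (g : Fin k → Bool) (v : Fin k) :
    m.foldl (fun g v => Function.update g v (b v)) g v = if v ∈ m then b v else g v := by
  induction m generalizing g with
  | nil => simp
  | cons a m ih =>
    simp only [List.foldl_cons, ih, List.mem_cons]
    by_cases h : v ∈ m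
    · simp [h]
    · by_cases hv : v = a
      · subst hv; simp [h, Function.update_self]
      · simp [h, hv, Function.update_of_ne hv]

def diffs (a b : Fin k → Bool) : Finset (Fin k) :=
  Finset.univ.filter fun v => a v ≠ b v

def Pf (a b ζ : Fin k → Bool) : Finset (Fin k) :=
  Finset.univ.filter fun v => a v ≠ b v ∧ b v = ζ v

lemma Pf_subset (a b ζ : Fin k → Bool) : Pf a b ζ ⊆ diffs a b := by
  intro v hv
  simp only [Pf, diffs, Finset.mem_filter, Finset.mem_univ, true_and] at *
  exact hv.1

lemma mem_orders {a b : Fin k → Bool} {l : List (Fin k)} :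
    l ∈ orders a b ↔ l ~ (diffs a b).toList := by
  simp only [orders, diffs, List.mem_toFinset, List.mem_permutations]

lemma card_orders (a b : Fin k → Bool) : (orders a b).card = Nat.factorial (diffs a b).card := by
  rw [orders]
  rw [List.toFinset_card_of_nodup (List.nodup_permutations _ (Finset.nodup_toList _))]
  rw [List.length_permutations, Finset.length_toList]
  rfl

lemma orders_pos (a b : Fin k → Bool) : 0 < (orders a b).card := by
  rw [card_orders]; exact Nat.factorial_pos _


lemma hit_iff {a b ζ : Fin k → Bool} {l : List (Fin k)} (hl : l ~ (diffs a b).toList) :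
    ζ ∈ flipSeq a b l ↔ ((∀ v, a v = b v → a v = ζ v) ∧
      (l.take (Pf a b ζ).card).toFinset = Pf a b ζ) := by
  have hnd : l.Nodup := (hl.nodup_iff).mpr (Finset.nodup_toList _)
  have hmem : ∀ v, v ∈ l ↔ a v ≠ b v := by
    intro v
    rw [hl.mem_iff, Finset.mem_toList]
    simp [diffs]
  rw [flipSeq, mem_scanl]
  constructor
  · rintro ⟨n, hn⟩
    have hval : ∀ v, ζ v = if v ∈ l.take n then b v else a v := by
      intro v; rw [hn, foldl_update]
    have hcond : ∀ v, a v = b v → a v = ζ v := by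
      intro v hv
      have hvl : v ∉ l := fun h => ((hmem v).1 h) hv
      have hvt : v ∉ l.take n := fun h => hvl (List.mem_of_mem_take h)
      rw [hval v, if_neg hvt]
    refine ⟨hcond, ?_⟩
    have hset : (l.take n).toFinset = Pf a b ζ := by
      ext v
      simp only [List.mem_toFinset, Pf, Finset.mem_filter, Finset.mem_univ, true_and]
      constructor
      · intro hv
        have h1 : v ∈ l := List.mem_of_mem_take hv
        refine ⟨(hmem v).1 h1, ?_⟩
        have h2 := hval v; rw [if_pos hv] at h2; exact h2.symm
      · rintro ⟨h1, h2⟩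
        by_contra hv
        have h3 := hval v; rw [if_neg hv] at h3
        exact h1 (h3.symm.trans h2.symm)
    have hcard : (Pf a b ζ).card = min n l.length := by
      rw [← hset, List.toFinset_card_of_nodup (hnd.sublist (List.take_sublist n l)),
        List.length_take]
    have htk : l.take (Pf a b ζ).card = l.take n := by
      rw [hcard, List.take_eq_take_iff]
      omega
    rw [htk]; exact hset
  · rintro ⟨hcond, hset⟩
    refine ⟨(Pf a b ζ).card, ?_⟩
    funext v
    rw [foldl_update]
    split_ifs with hv
    · have hvP : v ∈ Pf a b ζ := by rw [← hset]; exact List.mem_toFinset.mpr hv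
      simp only [Pf, Finset.mem_filter, Finset.mem_univ, true_and] at hvP
      exact hvP.2.symm
    · by_cases hab : a v = b v
      · exact (hcond v hab).symm
      · have hvP : v ∉ Pf a b ζ := fun h => hv (List.mem_toFinset.mp (by rw [hset]; exact h))
        have h2 : b v ≠ ζ v := by
          intro h
          exact hvP (by
            simp only [Pf, Finset.mem_filter, Finset.mem_univ, true_and]
            exact ⟨hab, h⟩)
        exact (bool3 hab h2).symm


lemma perm_toList_of_toFinset {s : Finset (Fin k)} {l : List (Fin k)} (hnd : l.Nodup)
    (h : l.toFinset = s) : l ~ s.toList :=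
  List.perm_of_nodup_nodup_toFinset_eq hnd (Finset.nodup_toList s)
    (by rw [h, Finset.toList_toFinset])

lemma card_hit (a b ζ : Fin k → Bool) :
    ((orders a b).filter fun l => (l.take (Pf a b ζ).card).toFinset = Pf a b ζ).card
      = Nat.factorial (Pf a b ζ).card *
          Nat.factorial ((diffs a b).card - (Pf a b ζ).card) := by
  classical
  have hPD : Pf a b ζ ⊆ diffs a b := Pf_subset a b ζ
  set P := Pf a b ζ with hP
  set D := diffs a b with hD
  set Q := D \ P with hQ
  have hQcard : Q.card = D.card - P.card := Finset.card_sdiff_of_subset hPD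
  have htarget : (P.toList.permutations.toFinset ×ˢ Q.toList.permutations.toFinset).card
      = Nat.factorial P.card * Nat.factorial Q.card := by
    rw [Finset.card_product,
      List.toFinset_card_of_nodup (List.nodup_permutations _ (Finset.nodup_toList _)),
      List.toFinset_card_of_nodup (List.nodup_permutations _ (Finset.nodup_toList _)),
      List.length_permutations, List.length_permutations,
      Finset.length_toList, Finset.length_toList]
  rw [← hQcard, ← htarget]
  apply Finset.card_nbij' (fun l => (l.take P.card, l.drop P.card)) (fun q => q.1 ++ q.2)
  · intro l hl
    rw [Finset.mem_coe, Finset.mem_filter] at hl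
    obtain ⟨hlo, hset⟩ := hl
    have hperm : l ~ D.toList := mem_orders.mp hlo
    have hnd : l.Nodup := hperm.nodup_iff.mpr (Finset.nodup_toList _)
    have hndt : (l.take P.card).Nodup := hnd.sublist (List.take_sublist _ _)
    have hndd : (l.drop P.card).Nodup := hnd.sublist (List.drop_sublist _ _)
    have hlD : l.toFinset = D := by
      rw [List.toFinset_eq_of_perm _ _ hperm, Finset.toList_toFinset]
    have hdisj : List.Disjoint (l.take P.card) (l.drop P.card) := by
      have h := hnd
      rw [← List.take_append_drop P.card l, List.nodup_append] at h
      exact fun x hx1 hx2 => h.2.2 x hx1 x hx2 rfl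
    have hdset : (l.drop P.card).toFinset = Q := by
      ext v
      rw [hQ, Finset.mem_sdiff, ← hlD]
      simp only [List.mem_toFinset]
      constructor
      · intro hv
        refine ⟨List.mem_of_mem_drop hv, fun hvP => ?_⟩
        have hvt : v ∈ l.take P.card := by
          rw [← List.mem_toFinset, hset]; exact hvP
        exact hdisj hvt hv
      · rintro ⟨h1, h2⟩
        rw [← List.take_append_drop P.card l] at h1
        rcases List.mem_append.mp h1 with h | h
        · refine absurd ?_ h2
          rw [← hset]; exact List.mem_toFinset.mpr h
        · exact h
    rw [Finset.mem_coe, Finset.mem_product]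
    exact ⟨List.mem_toFinset.mpr (List.mem_permutations.mpr
        (perm_toList_of_toFinset hndt hset)),
      List.mem_toFinset.mpr (List.mem_permutations.mpr
        (perm_toList_of_toFinset hndd hdset))⟩
  · rintro ⟨l1, l2⟩ hq
    rw [Finset.mem_coe, Finset.mem_product] at hq
    obtain ⟨h1, h2⟩ := hq
    have hp1 : l1 ~ P.toList := List.mem_permutations.mp (List.mem_toFinset.mp h1)
    have hp2 : l2 ~ Q.toList := List.mem_permutations.mp (List.mem_toFinset.mp h2)
    have hnd1 : l1.Nodup := hp1.nodup_iff.mpr (Finset.nodup_toList _)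
    have hnd2 : l2.Nodup := hp2.nodup_iff.mpr (Finset.nodup_toList _)
    have hf1 : l1.toFinset = P := by
      rw [List.toFinset_eq_of_perm _ _ hp1, Finset.toList_toFinset]
    have hf2 : l2.toFinset = Q := by
      rw [List.toFinset_eq_of_perm _ _ hp2, Finset.toList_toFinset]
    have hlen1 : l1.length = P.card := by
      rw [hp1.length_eq, Finset.length_toList]
    have htake : (l1 ++ l2).take P.card = l1 := List.take_left' hlen1
    have hnd12 : (l1 ++ l2).Nodup := by
      rw [List.nodup_append]
      refine ⟨hnd1, hnd2, fun v hv1 w hv2 hvw => ?_⟩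
      subst hvw
      have hvP : v ∈ P := by rw [← hf1]; exact List.mem_toFinset.mpr hv1
      have hvQ : v ∈ Q := by rw [← hf2]; exact List.mem_toFinset.mpr hv2
      rw [hQ, Finset.mem_sdiff] at hvQ
      exact hvQ.2 hvP
    have hf12 : (l1 ++ l2).toFinset = D := by
      rw [List.toFinset_append, hf1, hf2, hQ]
      exact Finset.union_sdiff_of_subset hPD
    rw [Finset.mem_coe, Finset.mem_filter]
    exact ⟨mem_orders.mpr (perm_toList_of_toFinset hnd12 hf12),
      by rw [htake, hf1]⟩
  · intro l _
    exact List.take_append_drop _ l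
  · rintro ⟨l1, l2⟩ hq
    rw [Finset.mem_coe, Finset.mem_product] at hq
    have hp1 : l1 ~ P.toList := List.mem_permutations.mp (List.mem_toFinset.mp hq.1)
    have hlen1 : l1.length = P.card := by rw [hp1.length_eq, Finset.length_toList]
    dsimp only
    rw [List.take_left' hlen1, List.drop_left' hlen1]


def Cnd (a b ζ : Fin k → Bool) : Prop := ∀ v, a v = b v → a v = ζ v

noncomputable def legR (a b ζ : Fin k → Bool) : ℝ :=
  (((orders a b).filter fun l => ζ ∉ flipSeq a b l).card : ℝ) / ((orders a b).card : ℝ)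

lemma legR_nonneg (a b ζ : Fin k → Bool) : 0 ≤ legR a b ζ :=
  div_nonneg (Nat.cast_nonneg _) (Nat.cast_nonneg _)

lemma legR_le_one (a b ζ : Fin k → Bool) : legR a b ζ ≤ 1 := by
  rw [legR, div_le_one (by exact_mod_cast orders_pos a b)]
  exact_mod_cast Finset.card_filter_le _ _

lemma legR_eq_one_of_not_cnd {a b ζ : Fin k → Bool} (h : ¬ Cnd a b ζ) :
    legR a b ζ = 1 := by
  rw [legR, Finset.filter_true_of_mem, div_self (by exact_mod_cast (orders_pos a b).ne')]
  intro l hl hmem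
  exact h ((hit_iff (mem_orders.mp hl)).mp hmem).1

lemma card_avoid {a b ζ : Fin k → Bool} (h : Cnd a b ζ) :
    ((orders a b).filter fun l => ζ ∉ flipSeq a b l).card
      = Nat.factorial (diffs a b).card -
          Nat.factorial (Pf a b ζ).card *
            Nat.factorial ((diffs a b).card - (Pf a b ζ).card) := by
  classical
  have hsplit := Finset.card_filter_add_card_filter_not
    (s := orders a b) (p := fun l => ζ ∈ flipSeq a b l)
  have hcongr : (orders a b).filter (fun l => ζ ∈ flipSeq a b l)
      = (orders a b).filter fun l => (l.take (Pf a b ζ).card).toFinset = Pf a b ζ := by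
    apply Finset.filter_congr
    intro l hl
    rw [hit_iff (mem_orders.mp hl)]
    exact ⟨fun hx => hx.2, fun hx => ⟨h, hx⟩⟩
  rw [hcongr, card_hit, card_orders] at hsplit
  have hcc : ((orders a b).filter fun l => ζ ∉ flipSeq a b l).card
      = ((orders a b).filter fun l => ¬ ζ ∈ flipSeq a b l).card := rfl
  omega

lemma key_ineq (p q p' q' : ℕ) (hp : p ≤ p') (hq : q ≤ q') :
    ((Nat.factorial (p + q) - Nat.factorial p * Nat.factorial q : ℕ) : ℝ) /
        (Nat.factorial (p + q) : ℝ)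
      ≤ ((Nat.factorial (p' + q') - Nat.factorial p' * Nat.factorial q' : ℕ) : ℝ) /
        (Nat.factorial (p' + q') : ℝ) := by
  have hdvd : ∀ p q : ℕ, Nat.factorial p * Nat.factorial q ≤ Nat.factorial (p + q) :=
    fun p q => Nat.le_of_dvd (Nat.factorial_pos _)
      (Nat.factorial_mul_factorial_dvd_factorial_add p q)
  have heq : ∀ p q : ℕ,
      ((Nat.factorial (p + q) - Nat.factorial p * Nat.factorial q : ℕ) : ℝ) /
          (Nat.factorial (p + q) : ℝ)
        = 1 - 1 / ((p + q).choose p : ℝ) := by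
    intro p q
    have hc := Nat.choose_mul_factorial_mul_factorial (Nat.le_add_right p q)
    rw [Nat.add_sub_cancel_left] at hc
    have hfact : ((p + q).factorial : ℝ)
        = ((p + q).choose p : ℝ) * ((p.factorial : ℝ) * (q.factorial : ℝ)) := by
      exact_mod_cast (by rw [← hc]; ring : ((p+q).factorial : ℕ) = (p+q).choose p * (p.factorial * q.factorial))
    have h0 : ((p + q).factorial : ℝ) ≠ 0 := by
      exact_mod_cast (Nat.factorial_pos (p + q)).ne'
    have hc0 : (((p + q).choose p : ℕ) : ℝ) ≠ 0 := by
      exact_mod_cast (Nat.choose_pos (Nat.le_add_right p q)).ne'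
    rw [Nat.cast_sub (hdvd p q)]
    rw [sub_div, div_self h0]
    congr 1
    rw [hfact]
    rw [Nat.cast_mul]
    field_simp
  rw [heq, heq]
  have hchoose : (p + q).choose p ≤ (p' + q').choose p' := by
    calc (p + q).choose p = (p + q).choose q := by
          rw [← Nat.choose_symm (Nat.le_add_right p q), Nat.add_sub_cancel_left]
      _ ≤ (p' + q).choose q := Nat.choose_le_choose q (Nat.add_le_add_right hp q)
      _ = (p' + q).choose p' := by
          rw [← Nat.choose_symm (Nat.le_add_left q p'), Nat.add_sub_cancel]
      _ ≤ (p' + q').choose p' := Nat.choose_le_choose p' (Nat.add_le_add_left hq p')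
  have hpos : (0 : ℝ) < ((p + q).choose p : ℝ) := by
    exact_mod_cast Nat.choose_pos (Nat.le_add_right p q)
  have := one_div_le_one_div_of_le hpos (by exact_mod_cast hchoose :
    ((p + q).choose p : ℝ) ≤ ((p' + q').choose p' : ℝ))
  linarith


lemma legR_formula {a b ζ : Fin k → Bool} (hc : Cnd a b ζ) :
    legR a b ζ =
      ((Nat.factorial ((Finset.univ.filter fun v => a v ≠ ζ v).card +
          (Finset.univ.filter fun v => b v ≠ ζ v).card) -
        Nat.factorial (Finset.univ.filter fun v => a v ≠ ζ v).card *
        Nat.factorial (Finset.univ.filter fun v => b v ≠ ζ v).card : ℕ) : ℝ) /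
      ((Nat.factorial ((Finset.univ.filter fun v => a v ≠ ζ v).card +
          (Finset.univ.filter fun v => b v ≠ ζ v).card) : ℕ) : ℝ) := by
  classical
  have hP : Pf a b ζ = Finset.univ.filter fun v => a v ≠ ζ v := by
    ext v
    simp only [Pf, Finset.mem_filter, Finset.mem_univ, true_and]
    constructor
    · rintro ⟨h1, h2⟩; exact fun h => h1 (h.trans h2.symm)
    · intro h1
      have hab : a v ≠ b v := fun h => h1 (hc v h)
      exact ⟨hab, bool3 (Ne.symm hab) h1⟩
  have hDsplit : diffs a b = Pf a b ζ ∪ (Finset.univ.filter fun v => b v ≠ ζ v) := by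
    ext v
    simp only [diffs, Pf, Finset.mem_union, Finset.mem_filter, Finset.mem_univ, true_and]
    constructor
    · intro h1
      by_cases h2 : b v = ζ v
      · exact Or.inl ⟨h1, h2⟩
      · exact Or.inr h2
    · rintro (⟨h1, _⟩ | h1)
      · exact h1
      · intro h
        exact h1 (h.symm.trans (hc v h))
  have hdisj : Disjoint (Pf a b ζ) (Finset.univ.filter fun v => b v ≠ ζ v) := by
    rw [Finset.disjoint_left]
    intro v hv1 hv2
    simp only [Pf, Finset.mem_filter, Finset.mem_univ, true_and] at hv1 hv2
    exact hv2 hv1.2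
  have hcardD : (diffs a b).card
      = (Pf a b ζ).card + (Finset.univ.filter fun v => b v ≠ ζ v).card := by
    rw [hDsplit, Finset.card_union_of_disjoint hdisj]
  rw [legR, card_avoid hc, card_orders, hcardD, hP, Nat.add_sub_cancel_left]

lemma legR_mono_src {a a' b ζ : Fin k → Bool} (h : ∀ v, a v ≠ ζ v → a' v ≠ ζ v) :
    legR a b ζ ≤ legR a' b ζ := by
  by_cases hc' : Cnd a' b ζ
  swap
  · rw [legR_eq_one_of_not_cnd hc']; exact legR_le_one a b ζ
  have hc : Cnd a b ζ := by
    intro v hab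
    by_contra haζ
    have ha' := h v haζ
    have hb : b v ≠ ζ v := fun hbz => haζ (hab.trans hbz)
    exact ha' (hc' v (bool3 ha' (Ne.symm hb)))
  rw [legR_formula hc, legR_formula hc']
  refine key_ineq _ _ _ _ (Finset.card_le_card fun v hv => ?_) le_rfl
  simp only [Finset.mem_filter, Finset.mem_univ, true_and] at hv ⊢
  exact h v hv

lemma legR_mono_tgt {a b b' ζ : Fin k → Bool} (h : ∀ v, b v ≠ ζ v → b' v ≠ ζ v) :
    legR a b ζ ≤ legR a b' ζ := by
  by_cases hc' : Cnd a b' ζ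
  swap
  · rw [legR_eq_one_of_not_cnd hc']; exact legR_le_one a b ζ
  have hc : Cnd a b ζ := by
    intro v hab
    by_contra haζ
    have hb : b v ≠ ζ v := fun hbz => haζ (hab.trans hbz)
    have hb' := h v hb
    exact haζ (hc' v (bool3 haζ (Ne.symm hb')))
  rw [legR_formula hc, legR_formula hc']
  refine key_ineq _ _ _ _ le_rfl (Finset.card_le_card fun v hv => ?_)
  simp only [Finset.mem_filter, Finset.mem_univ, true_and] at hv ⊢
  exact h v hv


lemma bool_ne_not {x b : Bool} (h : x ≠ !b) : x = b := by
  revert h; revert x b; decide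

lemma exists_zeta (C : Clause (Fin k)) (hw : C.length = k)
    (hnd : (C.map Prod.fst).Nodup) :
    ∃ ζ : Fin k → Bool, (∀ α : Fin k → Bool, satClause α C = true ↔ α ≠ ζ) ∧
      (∀ v : Fin k, ∃ b, (v, b) ∈ C ∧ ζ v = !b) := by
  have hkeys : ∀ v : Fin k, ∃ b, (v, b) ∈ C := by
    intro v
    have hcard : (C.map Prod.fst).toFinset = Finset.univ := by
      apply Finset.eq_univ_of_card
      rw [List.toFinset_card_of_nodup hnd, List.length_map, hw, Fintype.card_fin]
    have hv : v ∈ C.map Prod.fst := by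
      rw [← List.mem_toFinset, hcard]; exact Finset.mem_univ v
    obtain ⟨l, hl, hfst⟩ := List.mem_map.mp hv
    exact ⟨l.2, by rw [← hfst]; exact hl⟩
  have huniq : ∀ v b b', (v, b) ∈ C → (v, b') ∈ C → b = b' := by
    intro v b b' h1 h2
    have := List.inj_on_of_nodup_map hnd h1 h2 rfl
    exact congrArg Prod.snd this
  refine ⟨fun v => !(hkeys v).choose, fun α => ?_, fun v => ⟨(hkeys v).choose, (hkeys v).choose_spec, rfl⟩⟩
  rw [satClause, List.any_eq_true]
  constructor
  · rintro ⟨l, hl, hab⟩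
    rw [beq_iff_eq] at hab
    intro hEq
    have h1 : α l.1 = !(hkeys l.1).choose := congrFun hEq l.1
    have h2 : l.2 = (hkeys l.1).choose := huniq l.1 l.2 _ (by rw [Prod.mk.eta]; exact hl) (hkeys l.1).choose_spec
    rw [hab, h2] at h1
    simp at h1
  · intro hne
    obtain ⟨v, hv⟩ := Function.ne_iff.mp hne
    refine ⟨(v, (hkeys v).choose), (hkeys v).choose_spec, ?_⟩
    rw [beq_iff_eq]
    exact bool_ne_not hv

lemma term_eq (C : Clause (Fin k)) (ζ : Fin k → Bool)
    (hζ : ∀ α : Fin k → Bool, satClause α C = true ↔ α ≠ ζ) (s e γ : Fin k → Bool) :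
    (((orders s γ ×ˢ orders γ e).filter fun p =>
        (flipSeq s γ p.1 ++ flipSeq γ e p.2).all fun α => satClause α C).card : ℝ) /
      ((orders s γ ×ˢ orders γ e).card : ℝ)
    = legR s γ ζ * legR γ e ζ := by
  classical
  have hL : ∀ L : List (Fin k → Bool), (∀ α ∈ L, satClause α C = true) ↔ ζ ∉ L := by
    intro L
    constructor
    · intro hall hmem
      exact (hζ ζ).mp (hall ζ hmem) rfl
    · intro hmem α hα
      exact (hζ α).mpr fun h => hmem (h ▸ hα)
  have hfilter : ((orders s γ ×ˢ orders γ e).filter fun p =>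
      (flipSeq s γ p.1 ++ flipSeq γ e p.2).all fun α => satClause α C)
      = ((orders s γ).filter fun l => ζ ∉ flipSeq s γ l) ×ˢ
        ((orders γ e).filter fun l => ζ ∉ flipSeq γ e l) := by
    ext p
    simp only [Finset.mem_filter, Finset.mem_product, List.all_append, Bool.and_eq_true,
      List.all_eq_true, ← hL]
    tauto
  rw [hfilter, Finset.card_product, Finset.card_product]
  push_cast
  rw [mul_div_mul_comm]
  rfl

end Stmt2Aux

/-- Monotonicity: if each literal of `C` true under `s` (resp. `e`) stays
true under `s'` (resp. `e'`), then the probability that the random concatenated sequence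
`σ₁ ∘ σ₂` (through a uniformly random `γ`) satisfies `C` can only increase when the
endpoints are replaced by `s'`, `e'`. -/
theorem stmt2 {k : ℕ} (hk : 3 ≤ k) (C : Clause (Fin k))
    (hw : C.length = k) (hnd : (C.map Prod.fst).Nodup)
    (s e s' e' : Fin k → Bool)
    (hs : satClause s C) (he : satClause e C)
    (hs' : satClause s' C) (he' : satClause e' C)
    (hmono_s : ∀ l ∈ C, s l.1 = l.2 → s' l.1 = l.2)
    (hmono_e : ∀ l ∈ C, e l.1 = l.2 → e' l.1 = l.2) :
    probSatPair C s e ≤ probSatPair C s' e' := by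
  classical
  obtain ⟨ζ, hζ, hζlit⟩ := Stmt2Aux.exists_zeta C hw hnd
  have hms : ∀ v, s v ≠ ζ v → s' v ≠ ζ v := by
    intro v hv
    obtain ⟨b, hmem, hb⟩ := hζlit v
    rw [hb] at hv ⊢
    rw [hmono_s (v, b) hmem (Stmt2Aux.bool_ne_not hv)]
    simp
  have hme : ∀ v, e v ≠ ζ v → e' v ≠ ζ v := by
    intro v hv
    obtain ⟨b, hmem, hb⟩ := hζlit v
    rw [hb] at hv ⊢
    rw [hmono_e (v, b) hmem (Stmt2Aux.bool_ne_not hv)]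
    simp
  rw [probSatPair, probSatPair,
    div_le_div_iff_of_pos_right (by positivity : (0:ℝ) < 2 ^ k)]
  refine Finset.sum_le_sum fun γ _ => ?_
  rw [Stmt2Aux.term_eq C ζ hζ s e γ, Stmt2Aux.term_eq C ζ hζ s' e' γ]
  exact mul_le_mul (Stmt2Aux.legR_mono_src hms) (Stmt2Aux.legR_mono_tgt hme)
    (Stmt2Aux.legR_nonneg _ _ _) (Stmt2Aux.legR_nonneg _ _ _)
end

section
/- Let k ≥ 3 be an integer and C = ℓ_1 ∨ ⋯ ∨ ℓ_k a clause of width k over k distinct variables. Suppose α_start and α_end are assignments that each make exactly one literal of C true, and α_start ≠ α_end. Let γ be a uniformly random assignment and, conditioned on γ, let σ_1 ∼ 𝒜(α_start ↔ γ) and σ_2 ∼ 𝒜(γ ↔ α_end) be independent uniformly random irredundant reconfiguration sequences. Then, with K := k - 2, P[σ_1 ∘ σ_2 satisfies C] = Σ_{j=0}^{K} (1/4) · (binom(K,j)/2^K) · [ (j/(j+1))^2 + (j+1)/(j+2) + (j+1)/(j+2) + 1 ], and this quantity is at least 1 - 1/(k-1) - 1/k. -/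
variable {V : Type} [DecidableEq V]

lemma foldl_update (α β : V → Bool) (t : List V) (v : V) :
    t.foldl (fun g w => Function.update g w (β w)) α v = if v ∈ t then β v else α v := by
  induction t generalizing α with
  | nil => simp
  | cons x xs ih =>
    simp only [List.foldl_cons, ih, List.mem_cons]
    by_cases hv : v ∈ xs
    · simp [hv]
    · by_cases hx : v = x <;> simp [Function.update_apply, hv, hx]

lemma flipSeq_all_iff (Q : (V → Bool) → Bool) (α β : V → Bool) (l : List V) :
    ((flipSeq α β l).all Q = true) ↔
      ∀ t, t <+: l → Q (t.foldl (fun g w => Function.update g w (β w)) α) = true := by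
  induction l generalizing α with
  | nil =>
    simp only [flipSeq, List.scanl_nil, List.all_cons, List.all_nil, Bool.and_true]
    constructor
    · rintro h t ht
      rw [List.prefix_nil.mp ht]; simpa using h
    · intro h; simpa using h [] List.nil_prefix
  | cons x xs ih =>
    simp only [flipSeq] at *
    rw [List.scanl_cons]
    simp only [List.all_append, List.all_cons, List.all_nil, Bool.and_true, Bool.and_eq_true]
    rw [ih]
    constructor
    · rintro ⟨hα, h⟩ t ht
      rcases List.prefix_cons_iff.mp ht with rfl | ⟨t', rfl, ht'⟩
      · simpa using hα
      · simpa using h t' ht'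
    · intro h
      refine ⟨by simpa using h [] List.nil_prefix, fun t ht => ?_⟩
      simpa using h (x :: t) (List.prefix_cons_iff.mpr (Or.inr ⟨t, rfl, ht⟩))

variable {V : Type} [DecidableEq V]

lemma bool3 {x y z : Bool} (h1 : x ≠ y) (h2 : x ≠ z) : y = z := by
  revert h1 h2; revert x y z; decide

lemma seg1_bad_iff (β₀ s γ : V → Bool) (a : V) (hs : ∀ v, (s v ≠ β₀ v) ↔ v = a)
    (p : List V) (hnd : p.Nodup) (hmem : ∀ v, v ∈ p ↔ s v ≠ γ v) :
    (∃ t, t <+: p ∧ (t.foldl (fun g w => Function.update g w (γ w)) s) = β₀) ↔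
      p.head? = some a := by
  constructor
  · rintro ⟨t, ht, heq⟩
    have hst : ∀ v, (if v ∈ t then γ v else s v) = β₀ v := fun v => by
      rw [← foldl_update s γ t v, heq]
    have hat : a ∈ t := by
      by_contra h
      have := hst a; rw [if_neg h] at this
      exact (hs a).mpr rfl this
    have honly : ∀ v ∈ t, v = a := by
      intro v hv
      by_contra hva
      have h1 : s v ≠ γ v := (hmem v).mp (ht.subset hv)
      have h2 : s v = β₀ v := by
        by_contra h'; exact hva ((hs v).mp h')
      have := hst v; rw [if_pos hv] at this
      exact h1 (h2.trans this.symm)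
    rcases t with _ | ⟨y, t'⟩
    · exact absurd hat (List.not_mem_nil)
    · have hy : y = a := honly y (List.mem_cons_self)
      rcases ht with ⟨r, rfl⟩
      simp [hy]
  · intro h
    rcases p with _ | ⟨y, p'⟩
    · simp at h
    · have hy : y = a := by simpa using h
      refine ⟨[y], ⟨p', rfl⟩, funext fun v => ?_⟩
      rw [foldl_update]
      by_cases hva : v = y
      · subst hva
        rw [if_pos (List.mem_singleton_self v)]
        have h1 : s v ≠ γ v := (hmem v).mp (List.mem_cons_self)
        have h2 : s v ≠ β₀ v := (hs v).mpr hy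
        exact bool3 h1 h2
      · rw [if_neg (by simpa using hva)]
        by_contra h'
        exact hva (((hs v).mp h').trans hy.symm)

lemma seg2_bad_iff (β₀ e γ : V → Bool) (b : V) (he : ∀ v, (e v ≠ β₀ v) ↔ v = b)
    (p : List V) (hnd : p.Nodup) (hmem : ∀ v, v ∈ p ↔ γ v ≠ e v) :
    (∃ t, t <+: p ∧ (t.foldl (fun g w => Function.update g w (e w)) γ) = β₀) ↔
      p.getLast? = some b := by
  constructor
  · rintro ⟨t, ht, heq⟩
    have hst : ∀ v, (if v ∈ t then e v else γ v) = β₀ v := fun v => by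
      rw [← foldl_update γ e t v, heq]
    have hbt : b ∉ t := by
      intro h
      have := hst b; rw [if_pos h] at this
      exact (he b).mpr rfl this
    have honly : ∀ v ∈ p, v ∉ t → v = b := by
      intro v hv hvt
      by_contra hvb
      have h1 : γ v ≠ e v := (hmem v).mp hv
      have h2 : e v = β₀ v := by
        by_contra h'; exact hvb ((he v).mp h')
      have := hst v; rw [if_neg hvt] at this
      exact h1 (this.trans h2.symm)
    rcases ht with ⟨r, rfl⟩
    have hdisj := List.disjoint_of_nodup_append hnd
    have hrb : ∀ v ∈ r, v = b := by
      intro v hv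
      exact honly v (List.mem_append_right _ hv) (fun h => hdisj h hv)
    have hbp : b ∈ t ++ r := by
      rw [hmem]
      have hgb : γ b = β₀ b := by
        have := hst b; rw [if_neg hbt] at this; exact this
      have h2 : e b ≠ β₀ b := (he b).mpr rfl
      intro h'; exact h2 (h' ▸ hgb)
    have hbr : b ∈ r := (List.mem_append.mp hbp).resolve_left
      (fun h => absurd h hbt)
    have hr : r = [b] := by
      have hrnd : r.Nodup := (List.nodup_append.mp hnd).2.1
      rcases r with _ | ⟨y, r'⟩
      · exact absurd hbr (List.not_mem_nil)
      · have hy : y = b := hrb y (List.mem_cons_self)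
        rcases r' with _ | ⟨z, r''⟩
        · rw [hy]
        · have hz : z = b := hrb z (by simp)
          exfalso
          exact (List.nodup_cons.mp hrnd).1
            (by rw [hy.trans hz.symm]; exact List.mem_cons_self)
    rw [hr, List.getLast?_concat]
  · intro h
    rcases List.getLast?_eq_some_iff.mp h with ⟨t, rfl⟩
    have hbt : b ∉ t := by
      have := List.disjoint_of_nodup_append hnd
      intro h'; exact this h' (List.mem_singleton_self b)
    refine ⟨t, ⟨[b], rfl⟩, funext fun v => ?_⟩
    rw [foldl_update]
    by_cases hvt : v ∈ t
    · rw [if_pos hvt]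
      have hvb : v ≠ b := fun h' => hbt (h' ▸ hvt)
      by_contra h'
      exact hvb ((he v).mp h')
    · rw [if_neg hvt]
      by_cases hvb : v = b
      · rw [hvb]
        have h1 : γ b ≠ e b := (hmem b).mp (by simp)
        have h2 : e b ≠ β₀ b := (he b).mpr rfl
        exact bool3 (Ne.symm h1) h2
      · have hvp : v ∉ t ++ [b] := by simp [hvt, hvb]
        have : ¬(γ v ≠ e v) := fun h' => hvp ((hmem v).mpr h')
        have hge : γ v = e v := not_not.mp this
        have hev : e v = β₀ v := by
          by_contra h'; exact hvb ((he v).mp h')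
        exact hge.trans hev

variable {V : Type} [DecidableEq V]

noncomputable def permsOf (D : Finset V) : Finset (List V) := D.toList.permutations.toFinset

lemma mem_permsOf {D : Finset V} {p : List V} : p ∈ permsOf D ↔ (p : Multiset V) = D.val := by
  rw [permsOf, List.mem_toFinset, List.mem_permutations]
  constructor
  · intro h
    have : (p : Multiset V) = (D.toList : Multiset V) := Quot.sound h
    rwa [Finset.toList, Multiset.coe_toList] at this
  · intro h
    have : (p : Multiset V) = (D.toList : Multiset V) := by
      rw [h, Finset.toList, Multiset.coe_toList]
    exact Quotient.exact this

lemma permsOf_nodup {D : Finset V} {p : List V} (hp : p ∈ permsOf D) : p.Nodup := by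
  rw [mem_permsOf] at hp
  have : Multiset.Nodup (p : Multiset V) := hp ▸ D.nodup
  exact this

lemma permsOf_mem_iff {D : Finset V} {p : List V} (hp : p ∈ permsOf D) (v : V) :
    v ∈ p ↔ v ∈ D := by
  rw [mem_permsOf] at hp
  rw [← Multiset.mem_coe, hp]
  exact Iff.rfl

lemma card_permsOf (D : Finset V) : (permsOf D).card = D.card.factorial := by
  rw [permsOf, List.toFinset_card_of_nodup (List.nodup_permutations _ D.nodup_toList),
    List.length_permutations, Finset.length_toList]

lemma card_filter_head {D : Finset V} {a : V} (ha : a ∈ D) :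
    ((permsOf D).filter fun p => p.head? = some a).card = (D.card - 1).factorial := by
  have key : ((permsOf D).filter fun p => p.head? = some a).card = (permsOf (D.erase a)).card := by
    refine Finset.card_bij' (fun p _ => p.tail) (fun q _ => a :: q) ?_ ?_ ?_ ?_
    · rintro p hp
      rw [Finset.mem_filter] at hp
      obtain ⟨hp1, hp2⟩ := hp
      rcases p with _ | ⟨x, p'⟩
      · simp at hp2
      · have hx : x = a := by simpa using hp2
        subst hx
        rw [mem_permsOf] at hp1 ⊢
        rw [Finset.erase_val, ← hp1]
        simp [Multiset.cons_coe]
    · rintro q hq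
      rw [Finset.mem_filter]
      rw [mem_permsOf] at hq ⊢
      constructor
      · show ((a :: q : List V) : Multiset V) = D.val
        rw [← Multiset.cons_coe, hq, Finset.erase_val, Multiset.cons_erase (Finset.mem_def.mp ha)]
      · rfl
    · rintro p hp
      rw [Finset.mem_filter] at hp
      rcases p with _ | ⟨x, p'⟩
      · simp at hp
      · have : x = a := by simpa using hp.2
        simp [this]
    · rintro q hq
      rfl
  rw [key, card_permsOf, Finset.card_erase_of_mem ha]

lemma card_filter_getLast {D : Finset V} {b : V} (hb : b ∈ D) :
    ((permsOf D).filter fun p => p.getLast? = some b).card = (D.card - 1).factorial := by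
  have key : ((permsOf D).filter fun p => p.getLast? = some b).card =
      ((permsOf D).filter fun p => p.head? = some b).card := by
    refine Finset.card_bij' (fun p _ => p.reverse) (fun q _ => q.reverse) ?_ ?_ ?_ ?_
    · rintro p hp
      rw [Finset.mem_filter] at hp ⊢
      refine ⟨?_, by rw [List.head?_reverse]; exact hp.2⟩
      rw [mem_permsOf] at hp ⊢
      rw [← hp.1]
      exact Multiset.coe_reverse p
    · rintro q hq
      rw [Finset.mem_filter] at hq ⊢
      refine ⟨?_, ?_⟩
      · rw [mem_permsOf] at hq ⊢
        rw [← hq.1]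
        exact Multiset.coe_reverse q
      · rw [← List.head?_reverse, List.reverse_reverse]; exact hq.2
    · rintro p _; exact List.reverse_reverse p
    · rintro q _; exact List.reverse_reverse q
  rw [key, card_filter_head hb]

lemma card_filter_head_not_mem {D : Finset V} {a : V} (ha : a ∉ D) :
    ((permsOf D).filter fun p => p.head? = some a).card = 0 := by
  rw [Finset.card_eq_zero, Finset.filter_eq_empty_iff]
  intro p hp hh
  rcases p with _ | ⟨x, p'⟩
  · simp at hh
  · have : x = a := by simpa using hh
    exact ha ((permsOf_mem_iff hp a).mp (this ▸ List.mem_cons_self))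

lemma card_filter_getLast_not_mem {D : Finset V} {b : V} (hb : b ∉ D) :
    ((permsOf D).filter fun p => p.getLast? = some b).card = 0 := by
  rw [Finset.card_eq_zero, Finset.filter_eq_empty_iff]
  intro p hp hh
  rcases List.getLast?_eq_some_iff.mp hh with ⟨t, rfl⟩
  exact hb ((permsOf_mem_iff hp b).mp (by simp))


variable {V : Type} [Fintype V] [DecidableEq V]

lemma filter_head_ratio (D : Finset V) (a : V) :
    ((((permsOf D).filter fun p => ¬(p.head? = some a)).card : ℝ)) / ((permsOf D).card : ℝ)
      = if a ∈ D then ((D.card : ℝ) - 1) / (D.card : ℝ) else 1 := by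
  have hsplit : ((permsOf D).filter fun p => p.head? = some a).card +
      ((permsOf D).filter fun p => ¬(p.head? = some a)).card = (permsOf D).card := by
    convert Finset.card_filter_add_card_filter_not
      (s := permsOf D) (p := fun p => p.head? = some a) using 3
  by_cases ha : a ∈ D
  · rw [if_pos ha]
    obtain ⟨m, hm⟩ : ∃ m, D.card = m + 1 :=
      ⟨D.card - 1, (Nat.succ_pred_eq_of_pos (Finset.card_pos.mpr ⟨a, ha⟩)).symm⟩
    rw [card_filter_head ha, card_permsOf, hm] at hsplit
    simp only [Nat.add_sub_cancel] at hsplit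
    have hc : ((permsOf D).filter fun p => ¬(p.head? = some a)).card
        = (m + 1).factorial - m.factorial := by omega
    rw [hc, card_permsOf, hm]
    have h1 : (m + 1).factorial = (m + 1) * m.factorial := Nat.factorial_succ m
    have h2 : m.factorial ≤ (m + 1).factorial := Nat.factorial_le (by omega)
    rw [Nat.cast_sub h2]
    have hf : (0 : ℝ) < m.factorial := by exact_mod_cast m.factorial_pos
    rw [h1]
    push_cast
    field_simp
  · rw [if_neg ha]
    rw [card_filter_head_not_mem ha] at hsplit
    have hc : ((permsOf D).filter fun p => ¬(p.head? = some a)).card = (permsOf D).card := by omega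
    rw [hc]
    have : (0:ℝ) < (permsOf D).card := by
      rw [card_permsOf]; exact_mod_cast (D.card).factorial_pos
    field_simp

lemma filter_getLast_ratio (D : Finset V) (b : V) :
    ((((permsOf D).filter fun p => ¬(p.getLast? = some b)).card : ℝ)) / ((permsOf D).card : ℝ)
      = if b ∈ D then ((D.card : ℝ) - 1) / (D.card : ℝ) else 1 := by
  have hsplit : ((permsOf D).filter fun p => p.getLast? = some b).card +
      ((permsOf D).filter fun p => ¬(p.getLast? = some b)).card = (permsOf D).card := by
    convert Finset.card_filter_add_card_filter_not
      (s := permsOf D) (p := fun p => p.getLast? = some b) using 3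
  by_cases hb : b ∈ D
  · rw [if_pos hb]
    obtain ⟨m, hm⟩ : ∃ m, D.card = m + 1 :=
      ⟨D.card - 1, (Nat.succ_pred_eq_of_pos (Finset.card_pos.mpr ⟨b, hb⟩)).symm⟩
    rw [card_filter_getLast hb, card_permsOf, hm] at hsplit
    simp only [Nat.add_sub_cancel] at hsplit
    have hc : ((permsOf D).filter fun p => ¬(p.getLast? = some b)).card
        = (m + 1).factorial - m.factorial := by omega
    rw [hc, card_permsOf, hm]
    have h2 : m.factorial ≤ (m + 1).factorial := Nat.factorial_le (by omega)
    rw [Nat.cast_sub h2]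
    have hf : (0 : ℝ) < m.factorial := by exact_mod_cast m.factorial_pos
    rw [Nat.factorial_succ m]
    push_cast
    field_simp
  · rw [if_neg hb]
    rw [card_filter_getLast_not_mem hb] at hsplit
    have hc : ((permsOf D).filter fun p => ¬(p.getLast? = some b)).card = (permsOf D).card := by omega
    rw [hc]
    have : (0:ℝ) < (permsOf D).card := by
      rw [card_permsOf]; exact_mod_cast (D.card).factorial_pos
    field_simp

lemma bool_ne_iff {x y z : Bool} (h : x ≠ z) : (x ≠ y) ↔ (y = z) := by
  revert h; revert x y z; decide

lemma ratio_eq (C : Clause V) (β₀ s e γ : V → Bool) (a b : V)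
    (hsat : ∀ α, satClause α C = true ↔ α ≠ β₀)
    (hsa : ∀ v, (s v ≠ β₀ v) ↔ v = a) (heb : ∀ v, (e v ≠ β₀ v) ↔ v = b) :
    (((orders s γ ×ˢ orders γ e).filter fun p =>
          (flipSeq s γ p.1 ++ flipSeq γ e p.2).all fun α => satClause α C).card : ℝ) /
        ((orders s γ ×ˢ orders γ e).card : ℝ) =
      (if a ∈ Finset.univ.filter (fun v => γ v ≠ β₀ v) then (1:ℝ)
        else ((Finset.univ.filter (fun v => γ v ≠ β₀ v)).card : ℝ) /
          (((Finset.univ.filter (fun v => γ v ≠ β₀ v)).card : ℝ) + 1)) *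
      (if b ∈ Finset.univ.filter (fun v => γ v ≠ β₀ v) then (1:ℝ)
        else ((Finset.univ.filter (fun v => γ v ≠ β₀ v)).card : ℝ) /
          (((Finset.univ.filter (fun v => γ v ≠ β₀ v)).card : ℝ) + 1)) := by
  classical
  set S := Finset.univ.filter (fun v => γ v ≠ β₀ v) with hS
  set D1 := Finset.univ.filter (fun v => s v ≠ γ v) with hD1
  set D2 := Finset.univ.filter (fun v => γ v ≠ e v) with hD2
  have ho1 : orders s γ = permsOf D1 := rfl
  have ho2 : orders γ e = permsOf D2 := rfl
  have hfil : ((orders s γ ×ˢ orders γ e).filter fun p =>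
        (flipSeq s γ p.1 ++ flipSeq γ e p.2).all fun α => satClause α C)
      = ((permsOf D1).filter fun p => ¬(p.head? = some a)) ×ˢ
        ((permsOf D2).filter fun p => ¬(p.getLast? = some b)) := by
    rw [ho1, ho2, ← Finset.filter_product]
    apply Finset.filter_congr
    rintro ⟨p1, p2⟩ hp
    rw [Finset.mem_product] at hp
    obtain ⟨hp1, hp2⟩ := hp
    have hm1 : ∀ v, v ∈ p1 ↔ s v ≠ γ v := fun v =>
      (permsOf_mem_iff hp1 v).trans (by simp [hD1])
    have hm2 : ∀ v, v ∈ p2 ↔ γ v ≠ e v := fun v =>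
      (permsOf_mem_iff hp2 v).trans (by simp [hD2])
    show ((flipSeq s γ p1 ++ flipSeq γ e p2).all fun α => satClause α C) = true ↔ _
    rw [List.all_append, Bool.and_eq_true, flipSeq_all_iff, flipSeq_all_iff]
    apply and_congr
    · rw [← seg1_bad_iff β₀ s γ a hsa p1 (permsOf_nodup hp1) hm1]
      simp only [hsat]
      constructor
      · rintro h ⟨t, ht, heq⟩; exact (h t ht) heq
      · intro h t ht heq; exact h ⟨t, ht, heq⟩
    · rw [← seg2_bad_iff β₀ e γ b heb p2 (permsOf_nodup hp2) hm2]
      simp only [hsat]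
      constructor
      · rintro h ⟨t, ht, heq⟩; exact (h t ht) heq
      · intro h t ht heq; exact h ⟨t, ht, heq⟩
  rw [hfil, Finset.card_product, ho1, ho2, Finset.card_product]
  push_cast
  rw [mul_div_mul_comm, filter_head_ratio, filter_getLast_ratio]
  have hsa' : s a ≠ β₀ a := (hsa a).mpr rfl
  have heb' : e b ≠ β₀ b := (heb b).mpr rfl
  congr 1
  · by_cases hA : a ∈ S
    · have haD : a ∉ D1 := by
        rw [hD1, Finset.mem_filter]
        rw [hS, Finset.mem_filter] at hA
        rintro ⟨-, h⟩
        exact h (bool3 (Ne.symm hsa') (Ne.symm hA.2))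
      rw [if_neg haD, if_pos hA]
    · have hD1' : D1 = insert a S := by
        ext v
        rw [hD1, hS, Finset.mem_insert, Finset.mem_filter, Finset.mem_filter]
        by_cases hv : v = a
        · subst hv
          simp only [Finset.mem_univ, true_and, true_or, iff_true]
          rw [hS, Finset.mem_filter] at hA
          have hgb : γ v = β₀ v := not_not.mp (fun h => hA ⟨Finset.mem_univ v, h⟩)
          exact fun h => hsa' (h.trans hgb)
        · have hsv : s v = β₀ v := by
            by_contra h'; exact hv ((hsa v).mp h')
          simp only [Finset.mem_univ, true_and, hv, false_or]
          rw [hsv, ne_comm]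
      have haD : a ∈ D1 := by rw [hD1']; exact Finset.mem_insert_self a S
      rw [if_pos haD, if_neg hA, hD1', Finset.card_insert_of_notMem hA]
      push_cast
      ring_nf
  · by_cases hB : b ∈ S
    · have hbD : b ∉ D2 := by
        rw [hD2, Finset.mem_filter]
        rw [hS, Finset.mem_filter] at hB
        rintro ⟨-, h⟩
        exact h (bool3 (Ne.symm hB.2) (Ne.symm heb'))
      rw [if_neg hbD, if_pos hB]
    · have hD2' : D2 = insert b S := by
        ext v
        rw [hD2, hS, Finset.mem_insert, Finset.mem_filter, Finset.mem_filter]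
        by_cases hv : v = b
        · subst hv
          simp only [Finset.mem_univ, true_and, true_or, iff_true]
          rw [hS, Finset.mem_filter] at hB
          have hgb : γ v = β₀ v := not_not.mp (fun h => hB ⟨Finset.mem_univ v, h⟩)
          exact fun h => heb' (h.symm.trans hgb)
        · have hev : e v = β₀ v := by
            by_contra h'; exact hv ((heb v).mp h')
          simp only [Finset.mem_univ, true_and, hv, false_or]
          rw [hev]
      have hbD : b ∈ D2 := by rw [hD2']; exact Finset.mem_insert_self b S
      rw [if_pos hbD, if_neg hB, hD2', Finset.card_insert_of_notMem hB]
      push_cast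
      ring_nf

lemma bool_eq_not {x y : Bool} (h : x ≠ y) : x = !y := by
  revert h; revert x y; decide

lemma bool_ne_not {x y : Bool} (h : x ≠ !y) : x = y := by
  revert h; revert x y; decide

lemma sum_support (β₀ : V → Bool) (g : Finset V → ℝ) :
    ∑ γ : V → Bool, g (Finset.univ.filter fun v => γ v ≠ β₀ v)
      = ∑ S ∈ (Finset.univ : Finset V).powerset, g S := by
  classical
  apply Finset.sum_nbij' (i := fun γ => Finset.univ.filter fun v => γ v ≠ β₀ v)
    (j := fun S => fun v => if v ∈ S then !(β₀ v) else β₀ v)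
  · intro γ _; exact Finset.mem_powerset.mpr (Finset.filter_subset _ _)
  · intro S _; exact Finset.mem_univ _
  · intro γ _
    funext v
    by_cases h : γ v ≠ β₀ v
    · rw [if_pos (Finset.mem_filter.mpr ⟨Finset.mem_univ v, h⟩)]
      exact (bool_eq_not h).symm
    · have hnm : v ∉ Finset.filter (fun v => γ v ≠ β₀ v) Finset.univ :=
        fun hm => h (Finset.mem_filter.mp hm).2
      rw [if_neg hnm]
      exact (not_not.mp h).symm
  · intro S _
    ext v
    rw [Finset.mem_filter]
    by_cases h : v ∈ S
    · simp [h]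
    · simp [h]
  · intro γ _; rfl

lemma sum_powerset_card (u : Finset V) (F : ℕ → ℝ) :
    ∑ T ∈ u.powerset, F T.card
      = ∑ j ∈ Finset.range (u.card + 1), (u.card.choose j : ℝ) * F j := by
  rw [Finset.sum_powerset]
  apply Finset.sum_congr rfl
  intro j _
  calc ∑ T ∈ Finset.powersetCard j u, F T.card
      = ∑ _T ∈ Finset.powersetCard j u, F j :=
        Finset.sum_congr rfl (fun T hT => congrArg F (Finset.mem_powersetCard.mp hT).2)
    _ = (u.card.choose j : ℝ) * F j := by
        rw [Finset.sum_const, Finset.card_powersetCard, nsmul_eq_mul]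

lemma decomp_sum (a b : V) (hab : a ≠ b) :
    ∑ S ∈ (Finset.univ : Finset V).powerset,
      ((if a ∈ S then (1:ℝ) else (S.card:ℝ)/((S.card:ℝ)+1)) *
       (if b ∈ S then (1:ℝ) else (S.card:ℝ)/((S.card:ℝ)+1)))
      = ∑ j ∈ Finset.range ((Fintype.card V - 2) + 1),
          (((Fintype.card V - 2).choose j : ℝ) *
            (((j:ℝ)/((j:ℝ)+1))^2 + ((j:ℝ)+1)/((j:ℝ)+2) + ((j:ℝ)+1)/((j:ℝ)+2) + 1)) := by
  classical
  set u : Finset V := (Finset.univ.erase a).erase b with hu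
  have hbu : b ∈ Finset.univ.erase a := Finset.mem_erase.mpr ⟨hab.symm, Finset.mem_univ b⟩
  have hins1 : insert b u = Finset.univ.erase a := Finset.insert_erase hbu
  have hins2 : insert a (Finset.univ.erase a) = Finset.univ :=
    Finset.insert_erase (Finset.mem_univ a)
  have hanotin : a ∉ insert b u := by rw [hins1]; exact Finset.notMem_erase a _
  have hbnotin : b ∉ u := Finset.notMem_erase b _
  have hau : a ∉ u := fun h => Finset.notMem_erase a _ (Finset.mem_of_mem_erase h)
  have hucard : u.card = Fintype.card V - 2 := by
    rw [hu, Finset.card_erase_of_mem hbu, Finset.card_erase_of_mem (Finset.mem_univ a),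
      Finset.card_univ]
    omega
  have hdecomp : ∑ S ∈ (Finset.univ : Finset V).powerset,
      ((if a ∈ S then (1:ℝ) else (S.card:ℝ)/((S.card:ℝ)+1)) *
       (if b ∈ S then (1:ℝ) else (S.card:ℝ)/((S.card:ℝ)+1)))
      = ∑ T ∈ u.powerset,
          ((((T.card:ℝ)/((T.card:ℝ)+1))^2 + ((T.card:ℝ)+1)/((T.card:ℝ)+2)
            + ((T.card:ℝ)+1)/((T.card:ℝ)+2) + 1)) := by
    rw [← hins2, ← hins1, Finset.sum_powerset_insert hanotin,
      Finset.sum_powerset_insert hbnotin, Finset.sum_powerset_insert hbnotin,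
      ← Finset.sum_add_distrib, ← Finset.sum_add_distrib, ← Finset.sum_add_distrib]
    apply Finset.sum_congr rfl
    intro T hT
    have hTu : T ⊆ u := Finset.mem_powerset.mp hT
    have haT : a ∉ T := fun h => hau (hTu h)
    have hbT : b ∉ T := fun h => hbnotin (hTu h)
    have haTb : a ∉ insert b T := by
      simp only [Finset.mem_insert]
      rintro (h | h); exact hab h; exact haT h
    have hbTa : b ∉ insert a T := by
      simp only [Finset.mem_insert]
      rintro (h | h); exact hab h.symm; exact hbT h
    have hc1 : (insert b T).card = T.card + 1 := Finset.card_insert_of_notMem hbT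
    have hc2 : (insert a T).card = T.card + 1 := Finset.card_insert_of_notMem haT
    rw [if_neg haT, if_neg hbT, if_neg haTb, if_pos (Finset.mem_insert_self b T),
      if_pos (Finset.mem_insert_self a T), if_neg hbTa,
      if_pos (Finset.mem_insert_self a _),
      if_pos (Finset.mem_insert_of_mem (Finset.mem_insert_self b T)), hc1, hc2]
    push_cast
    ring
  rw [hdecomp, sum_powerset_card u
    (fun c => (((c:ℝ)/((c:ℝ)+1))^2 + ((c:ℝ)+1)/((c:ℝ)+2) + ((c:ℝ)+1)/((c:ℝ)+2) + 1)), hucard]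

lemma choose_sum1 (K : ℕ) : ∑ j ∈ Finset.range (K+1), (K+1).choose (j+1) = 2^(K+1) - 1 := by
  have h := Nat.sum_range_choose (K+1)
  have h' := Finset.sum_range_succ' (fun i => (K+1).choose i) (K+1)
  simp only [Nat.choose_zero_right] at h'
  omega

lemma choose_sum2 (K : ℕ) : ∑ j ∈ Finset.range (K+1), (K+2).choose (j+2) = 2^(K+2) - (K+3) := by
  have h : ∑ i ∈ Finset.range (K+3), (K+2).choose i = 2^(K+2) := by
    have := Nat.sum_range_choose (K+2)
    simpa using this
  have h1 : ∑ i ∈ Finset.range (K+3), (K+2).choose i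
      = ∑ i ∈ Finset.range (K+2), (K+2).choose (i+1) + 1 := by
    have := Finset.sum_range_succ' (fun i => (K+2).choose i) (K+2)
    simpa using this
  have h2 : ∑ i ∈ Finset.range (K+2), (K+2).choose (i+1)
      = ∑ i ∈ Finset.range (K+1), (K+2).choose (i+2) + (K+2) := by
    have := Finset.sum_range_succ' (fun i => (K+2).choose (i+1)) (K+1)
    simpa using this
  have hlt : K + 3 ≤ 2^(K+2) := by
    have := Nat.lt_two_pow_self (n := K+2)
    omega
  omega

lemma final_ineq (K : ℕ) :
    1 - 1/((K:ℝ)+1) - 1/((K:ℝ)+2) ≤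
      ∑ j ∈ Finset.range (K+1), (1/4 : ℝ) * ((K.choose j : ℝ)/2^K) *
        (((j:ℝ)/((j:ℝ)+1))^2 + ((j:ℝ)+1)/((j:ℝ)+2) + ((j:ℝ)+1)/((j:ℝ)+2) + 1) := by
  have hP0 : (0:ℝ) < 2^K := by positivity
  have hP1 : (1:ℝ) ≤ 2^K := by exact_mod_cast Nat.one_le_two_pow (n := K)
  have hx1 : (0:ℝ) < (K:ℝ)+1 := by positivity
  have hx2 : (0:ℝ) < (K:ℝ)+2 := by positivity
  -- real versions of the binomial sums
  have hsum1R : ∑ j ∈ Finset.range (K+1), ((K+1).choose (j+1) : ℝ) = 2*2^K - 1 := by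
    rw [← Nat.cast_sum, choose_sum1 K, Nat.cast_sub Nat.one_le_two_pow]
    push_cast
    ring
  have hsum2aR : ∑ j ∈ Finset.range (K+1), ((K+2).choose (j+2) : ℝ) = 4*2^K - ((K:ℝ)+3) := by
    rw [← Nat.cast_sum, choose_sum2 K, Nat.cast_sub (by have := Nat.lt_two_pow_self (n := K+2); omega)]
    push_cast
    ring
  have hterm2 : ∀ j : ℕ, ((j:ℝ)+1)*((K+2).choose (j+2):ℝ)
      = ((K:ℝ)+2)*((K+1).choose (j+1):ℝ) - ((K+2).choose (j+2):ℝ) := by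
    intro j
    have t2 := Nat.add_one_mul_choose_eq (K+1) (j+1)
    have t2R : ((K:ℝ)+2)*((K+1).choose (j+1):ℝ) = ((K+2).choose (j+2):ℝ)*((j:ℝ)+2) := by
      exact_mod_cast t2
    linear_combination -t2R
  have hsum2R : ∑ j ∈ Finset.range (K+1), ((j:ℝ)+1) * ((K+2).choose (j+2) : ℝ)
      = (K:ℝ)*(2*2^K) + 1 := by
    rw [Finset.sum_congr rfl (fun j _ => hterm2 j), Finset.sum_sub_distrib,
      ← Finset.mul_sum, hsum1R, hsum2aR]
    ring
  -- the two weighted sums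
  have hS1 : ∑ j ∈ Finset.range (K+1), (K.choose j:ℝ)/((j:ℝ)+1) = (2*2^K - 1)/((K:ℝ)+1) := by
    have hpt : ∀ j : ℕ, (K.choose j:ℝ)/((j:ℝ)+1) = ((K+1).choose (j+1):ℝ)/((K:ℝ)+1) := by
      intro j
      have t1 := Nat.add_one_mul_choose_eq K j
      have t1R : ((K:ℝ)+1)*(K.choose j:ℝ) = ((K+1).choose (j+1):ℝ)*((j:ℝ)+1) := by
        exact_mod_cast t1
      rw [div_eq_div_iff (by positivity) (by positivity)]
      linear_combination t1R
    rw [Finset.sum_congr rfl (fun j _ => hpt j), ← Finset.sum_div, hsum1R]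
  have hS2 : ∑ j ∈ Finset.range (K+1), (K.choose j:ℝ)/((j:ℝ)+2)
      = ((K:ℝ)*(2*2^K) + 1)/(((K:ℝ)+1)*((K:ℝ)+2)) := by
    have hpt : ∀ j : ℕ, (K.choose j:ℝ)/((j:ℝ)+2)
        = (((j:ℝ)+1)*((K+2).choose (j+2):ℝ))/(((K:ℝ)+1)*((K:ℝ)+2)) := by
      intro j
      have t1 := Nat.add_one_mul_choose_eq K j
      have t2 := Nat.add_one_mul_choose_eq (K+1) (j+1)
      have key : (K+1)*(K+2)*(K.choose j) = (j+1)*((j+2)*((K+2).choose (j+2))) := by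
        calc (K+1)*(K+2)*(K.choose j) = (K+2)*((K+1)*(K.choose j)) := by ring
          _ = (K+2)*((K+1).choose (j+1)*(j+1)) := by rw [t1]
          _ = (j+1)*((K+2)*((K+1).choose (j+1))) := by ring
          _ = (j+1)*((K+2).choose (j+2)*(j+2)) := by rw [t2]
          _ = (j+1)*((j+2)*((K+2).choose (j+2))) := by ring
      have keyR : (((K:ℝ)+1)*((K:ℝ)+2))*(K.choose j:ℝ)
          = (((j:ℝ)+1)*(((j:ℝ)+2)*((K+2).choose (j+2):ℝ))) := by exact_mod_cast key
      rw [div_eq_div_iff (by positivity) (by positivity)]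
      linear_combination keyR
    rw [Finset.sum_congr rfl (fun j _ => hpt j), ← Finset.sum_div, hsum2R]
  have hc : ∑ j ∈ Finset.range (K+1), (K.choose j:ℝ) = 2^K := by
    exact_mod_cast Nat.sum_range_choose K
  -- pointwise lower bound
  have hlow : ∀ j ∈ Finset.range (K+1),
      (K.choose j:ℝ)/2^K - ((K.choose j:ℝ)/((j:ℝ)+1))*(1/(2*2^K))
          - ((K.choose j:ℝ)/((j:ℝ)+2))*(1/(2*2^K)) ≤
        (1/4 : ℝ) * ((K.choose j : ℝ)/2^K) *
          (((j:ℝ)/((j:ℝ)+1))^2 + ((j:ℝ)+1)/((j:ℝ)+2) + ((j:ℝ)+1)/((j:ℝ)+2) + 1) := by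
    intro j _
    have hj1 : (0:ℝ) < (j:ℝ)+1 := by positivity
    have hj2 : (0:ℝ) < (j:ℝ)+2 := by positivity
    have hbr : 4 - 2*(1/((j:ℝ)+1)) - 2*(1/((j:ℝ)+2)) ≤
        ((j:ℝ)/((j:ℝ)+1))^2 + ((j:ℝ)+1)/((j:ℝ)+2) + ((j:ℝ)+1)/((j:ℝ)+2) + 1 := by
      have e1 : ((j:ℝ))/((j:ℝ)+1) = 1 - 1/((j:ℝ)+1) := by
        rw [eq_sub_iff_add_eq, ← add_div, div_self hj1.ne']
      have e2 : ((j:ℝ)+1)/((j:ℝ)+2) = 1 - 1/((j:ℝ)+2) := by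
        rw [eq_sub_iff_add_eq, ← add_div,
          show ((j:ℝ)+1+1) = (j:ℝ)+2 by ring, div_self hj2.ne']
      rw [e1, e2]
      have hsq : (1 - 1/((j:ℝ)+1))^2 = 1 - 2/((j:ℝ)+1) + (1/((j:ℝ)+1))^2 := by ring
      rw [hsq]
      linarith [sq_nonneg (1/((j:ℝ)+1))]
    have heqj : (K.choose j:ℝ)/2^K - ((K.choose j:ℝ)/((j:ℝ)+1))*(1/(2*2^K))
          - ((K.choose j:ℝ)/((j:ℝ)+2))*(1/(2*2^K))
        = (1/4 : ℝ) * ((K.choose j : ℝ)/2^K) * (4 - 2*(1/((j:ℝ)+1)) - 2*(1/((j:ℝ)+2))) := by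
      field_simp
      ring
    rw [heqj]
    apply mul_le_mul_of_nonneg_left hbr
    positivity
  calc 1 - 1/((K:ℝ)+1) - 1/((K:ℝ)+2)
      ≤ ∑ j ∈ Finset.range (K+1),
          ((K.choose j:ℝ)/2^K - ((K.choose j:ℝ)/((j:ℝ)+1))*(1/(2*2^K))
            - ((K.choose j:ℝ)/((j:ℝ)+2))*(1/(2*2^K))) := by
        rw [Finset.sum_sub_distrib, Finset.sum_sub_distrib, ← Finset.sum_div,
          ← Finset.sum_mul, ← Finset.sum_mul, hc, hS1, hS2, div_self (ne_of_gt hP0)]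
        rw [← sub_nonneg]
        have hkey : (1:ℝ) - ((2*2^K - 1)/((K:ℝ)+1))*(1/(2*2^K))
              - (((K:ℝ)*(2*2^K) + 1)/(((K:ℝ)+1)*((K:ℝ)+2)))*(1/(2*2^K))
              - (1 - 1/((K:ℝ)+1) - 1/((K:ℝ)+2))
            = 1/((2*2^K)*((K:ℝ)+1)) + (2*2^K - 1)/((2*2^K)*((K:ℝ)+1)*((K:ℝ)+2)) := by
          field_simp
          ring
        rw [hkey]
        have h1 : (0:ℝ) ≤ 1/((2*2^K)*((K:ℝ)+1)) := by positivity
        have h2 : (0:ℝ) ≤ (2*2^K - 1)/((2*2^K)*((K:ℝ)+1)*((K:ℝ)+2)) := by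
          apply div_nonneg (by linarith) (by positivity)
        linarith
    _ ≤ _ := Finset.sum_le_sum hlow


/-- If `s` and `e` each make exactly one literal of the width-`k` clause
`C` (over `k` distinct variables) true and `s ≠ e`, then, with `K := k - 2`, the probability
that the random concatenated sequence `σ₁ ∘ σ₂` (through a uniformly random `γ`) satisfies
`C` equals `∑_{j=0}^{K} (1/4)·(C(K,j)/2^K)·[(j/(j+1))² + (j+1)/(j+2) + (j+1)/(j+2) + 1]`,
and this quantity is at least `1 - 1/(k-1) - 1/k`. -/
theorem stmt3 {k : ℕ} (hk : 3 ≤ k) (C : Clause (Fin k))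
    (hw : C.length = k) (hnd : (C.map Prod.fst).Nodup)
    (s e : Fin k → Bool)
    (hs : (C.filter fun l => s l.1 == l.2).length = 1)
    (he : (C.filter fun l => e l.1 == l.2).length = 1)
    (hne : s ≠ e) :
    probSatPair C s e =
      ∑ j ∈ Finset.range (k - 2 + 1),
        (1 / 4 : ℝ) * (((k - 2).choose j : ℝ) / 2 ^ (k - 2)) *
          (((j : ℝ) / ((j : ℝ) + 1)) ^ 2 + ((j : ℝ) + 1) / ((j : ℝ) + 2) +
            ((j : ℝ) + 1) / ((j : ℝ) + 2) + 1) ∧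
    1 - 1 / ((k : ℝ) - 1) - 1 / (k : ℝ) ≤ probSatPair C s e := by
  classical
  -- the polarity function
  have hcov : ∀ v : Fin k, ∃ bv, (v, bv) ∈ C := by
    intro v
    have h1 : (C.map Prod.fst).toFinset = Finset.univ := by
      apply Finset.eq_univ_of_card
      rw [List.toFinset_card_of_nodup hnd, List.length_map, hw, Fintype.card_fin]
    have h2 : v ∈ (C.map Prod.fst).toFinset := h1 ▸ Finset.mem_univ v
    rw [List.mem_toFinset, List.mem_map] at h2
    obtain ⟨⟨v1, b1⟩, hl, hfst⟩ := h2
    exact ⟨b1, by rwa [show v1 = v from hfst] at hl⟩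
  choose pol hpol using hcov
  have huniq : ∀ l ∈ C, l.2 = pol l.1 := by
    intro l hl
    have h := List.inj_on_of_nodup_map hnd hl (hpol l.1) rfl
    exact congrArg Prod.snd h
  set β₀ : Fin k → Bool := fun v => !(pol v) with hβ₀
  -- satisfaction characterization
  have hsat : ∀ α, satClause α C = true ↔ α ≠ β₀ := by
    intro α
    rw [satClause, List.any_eq_true]
    constructor
    · rintro ⟨l, hl, he'⟩ heq
      have h2 : α l.1 = l.2 := eq_of_beq he'
      rw [heq, huniq l hl] at h2
      simp [hβ₀] at h2
    · intro hne'
      obtain ⟨v, hv⟩ := Function.ne_iff.mp hne'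
      refine ⟨(v, pol v), hpol v, ?_⟩
      have : α v = pol v := bool_ne_not (by simpa [hβ₀] using hv)
      simp [this]
  -- unique satisfied literal for s and e
  have hsup : ∀ f : Fin k → Bool, (C.filter fun l => f l.1 == l.2).length = 1 →
      ∃ x, f x = pol x ∧ ∀ v, (f v ≠ β₀ v) ↔ v = x := by
    intro f hf
    obtain ⟨l₀, hl₀⟩ := List.length_eq_one_iff.mp hf
    have hmem : l₀ ∈ C.filter fun l => f l.1 == l.2 := by
      rw [hl₀]; exact List.mem_singleton_self l₀
    rw [List.mem_filter] at hmem
    obtain ⟨hlC, hlp⟩ := hmem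
    have hl2 : l₀.2 = pol l₀.1 := huniq l₀ hlC
    have hfx : f l₀.1 = pol l₀.1 := by rw [← hl2]; exact eq_of_beq hlp
    refine ⟨l₀.1, hfx, fun v => ?_⟩
    constructor
    · intro hv
      have hfv : f v = pol v := bool_ne_not (by simpa [hβ₀] using hv)
      have hmem2 : (v, pol v) ∈ C.filter fun l => f l.1 == l.2 :=
        List.mem_filter.mpr ⟨hpol v, by simp [hfv]⟩
      rw [hl₀] at hmem2
      exact congrArg Prod.fst (List.mem_singleton.mp hmem2)
    · rintro rfl
      simp [hβ₀, hfx]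
  obtain ⟨a, hfa, hsa⟩ := hsup s hs
  obtain ⟨b, hgb, heb⟩ := hsup e he
  have hab : a ≠ b := by
    intro h
    apply hne
    funext v
    by_cases hv : v = a
    · subst hv; rw [hfa, h]; exact hgb.symm
    · have h1 : s v = β₀ v := not_not.mp (fun h' => hv ((hsa v).mp h'))
      have h2 : e v = β₀ v := not_not.mp (fun h' => hv (((heb v).mp h').trans h.symm))
      rw [h1, h2]
  -- main equality
  have hEq : probSatPair C s e =
      ∑ j ∈ Finset.range (k - 2 + 1),
        (1 / 4 : ℝ) * (((k - 2).choose j : ℝ) / 2 ^ (k - 2)) *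
          (((j : ℝ) / ((j : ℝ) + 1)) ^ 2 + ((j : ℝ) + 1) / ((j : ℝ) + 2) +
            ((j : ℝ) + 1) / ((j : ℝ) + 2) + 1) := by
    unfold probSatPair
    have hstep : ∀ γ : Fin k → Bool,
        (((orders s γ ×ˢ orders γ e).filter fun p =>
              (flipSeq s γ p.1 ++ flipSeq γ e p.2).all fun α => satClause α C).card : ℝ) /
            ((orders s γ ×ˢ orders γ e).card : ℝ) =
          (if a ∈ Finset.univ.filter (fun v => γ v ≠ β₀ v) then (1:ℝ)
            else (((Finset.univ.filter (fun v => γ v ≠ β₀ v)).card : ℝ))/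
              (((Finset.univ.filter (fun v => γ v ≠ β₀ v)).card : ℝ)+1)) *
          (if b ∈ Finset.univ.filter (fun v => γ v ≠ β₀ v) then (1:ℝ)
            else (((Finset.univ.filter (fun v => γ v ≠ β₀ v)).card : ℝ))/
              (((Finset.univ.filter (fun v => γ v ≠ β₀ v)).card : ℝ)+1)) :=
      fun γ => ratio_eq C β₀ s e γ a b hsat hsa heb
    have h2 : (∑ γ : Fin k → Bool,
        ((if a ∈ Finset.univ.filter (fun v => γ v ≠ β₀ v) then (1:ℝ)
            else (((Finset.univ.filter (fun v => γ v ≠ β₀ v)).card : ℝ))/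
              (((Finset.univ.filter (fun v => γ v ≠ β₀ v)).card : ℝ)+1)) *
          (if b ∈ Finset.univ.filter (fun v => γ v ≠ β₀ v) then (1:ℝ)
            else (((Finset.univ.filter (fun v => γ v ≠ β₀ v)).card : ℝ))/
              (((Finset.univ.filter (fun v => γ v ≠ β₀ v)).card : ℝ)+1)))) =
        ∑ S ∈ (Finset.univ : Finset (Fin k)).powerset,
          ((if a ∈ S then (1:ℝ) else (S.card:ℝ)/((S.card:ℝ)+1)) *
           (if b ∈ S then (1:ℝ) else (S.card:ℝ)/((S.card:ℝ)+1))) :=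
      sum_support β₀ (fun S =>
        (if a ∈ S then (1:ℝ) else (S.card:ℝ)/((S.card:ℝ)+1)) *
        (if b ∈ S then (1:ℝ) else (S.card:ℝ)/((S.card:ℝ)+1)))
    rw [Finset.sum_congr rfl (fun γ _ => hstep γ), h2, decomp_sum a b hab]
    rw [Fintype.card_fin]
    rw [Finset.sum_div]
    apply Finset.sum_congr rfl
    intro j _
    have hk2 : (2:ℝ)^k = 2^(k-2) * 4 := by
      have : k - 2 + 2 = k := by omega
      rw [← this, pow_add]; norm_num
    rw [hk2]
    have h1 : ((2:ℝ)^(k-2)) ≠ 0 := by positivity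
    have hj1 : ((j:ℝ)+1) ≠ 0 := by positivity
    have hj2 : ((j:ℝ)+2) ≠ 0 := by positivity
    field_simp
  refine ⟨hEq, ?_⟩
  rw [hEq]
  have hcast0 : (((k-2:ℕ)):ℝ) = (k:ℝ) - 2 := by
    have h2 : (2:ℕ) ≤ k := by omega
    exact Nat.cast_sub h2
  have hcast1 : ((k:ℝ) - 1) = ((k-2 : ℕ):ℝ) + 1 := by rw [hcast0]; ring
  have hcast2 : ((k:ℝ)) = ((k-2 : ℕ):ℝ) + 2 := by rw [hcast0]; ring
  rw [hcast1, hcast2]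
  exact final_ineq (k-2)
end

section
/- Let k ≥ 3 be an integer and C = ℓ_1 ∨ ⋯ ∨ ℓ_k a clause of width k over k distinct variables. Suppose α_start = α_end is an assignment that makes exactly one literal of C true. Let γ be a uniformly random assignment and, conditioned on γ, let σ_1 ∼ 𝒜(α_start ↔ γ) and σ_2 ∼ 𝒜(γ ↔ α_end) be independent uniformly random irredundant reconfiguration sequences. Then, with K := k - 1, P[σ_1 ∘ σ_2 satisfies C] = Σ_{j=0}^{K} (1/2) · (binom(K,j)/2^K) · [ (j/(j+1))^2 + 1 ], and this quantity is at least 1 - 2/k. -/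
namespace Stmt4A

/-- Membership in scanl. -/
lemma mem_scanl {α β : Type*} (f : α → β → α) (a : α) (l : List β) (x : α) :
    x ∈ l.scanl f a ↔ ∃ t, t <+: l ∧ x = t.foldl f a := by
  induction l generalizing a with
  | nil =>
    simp only [List.scanl_nil, List.mem_singleton]
    constructor
    · rintro rfl; exact ⟨[], List.prefix_refl _, rfl⟩
    · rintro ⟨t, ht, rfl⟩
      simp [List.prefix_nil.mp ht]
  | cons b l ih =>
    simp only [List.scanl_cons, List.mem_cons, ih]
    constructor
    · rintro (rfl | ⟨t, ht, rfl⟩)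
      · exact ⟨[], ⟨_, rfl⟩, rfl⟩
      · obtain ⟨r, hr⟩ := ht
        exact ⟨b :: t, ⟨r, by simp [hr]⟩, rfl⟩
    · rintro ⟨t, ht, rfl⟩
      match t with
      | [] => exact Or.inl rfl
      | c :: t =>
        obtain ⟨r, hr⟩ := ht
        injection hr with h1 h2
        subst h1
        exact Or.inr ⟨t, ⟨r, h2⟩, rfl⟩

lemma foldl_update {V : Type*} [DecidableEq V] (s γ : V → Bool) (t : List V) (v : V) :
    (t.foldl (fun g u => Function.update g u (γ u)) s) v = if v ∈ t then γ v else s v := by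
  induction t generalizing s with
  | nil => simp
  | cons a t ih =>
    simp only [List.foldl_cons, ih, List.mem_cons]
    by_cases hv : v ∈ t
    · simp [hv]
    · by_cases hva : v = a <;> simp [hv, hva, Function.update]

/-- Prefix with element-set {v₀} iff head is v₀. -/
lemma prefix_singleton_iff {V : Type*} {p : List V} (hp : p.Nodup) (v₀ : V) :
    (∃ t, t <+: p ∧ ∀ v, v ∈ t ↔ v = v₀) ↔ p.head? = some v₀ := by
  constructor
  · rintro ⟨t, ht, hmem⟩
    have hv₀ : v₀ ∈ t := (hmem v₀).mpr rfl
    have hnd : t.Nodup := ht.sublist.nodup hp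
    match t, hv₀ with
    | c :: t', _ =>
      have hc : c = v₀ := (hmem c).mp List.mem_cons_self
      have ht' : t' = [] := by
        cases t' with
        | nil => rfl
        | cons d t'' =>
          exfalso
          have hd : d = v₀ := (hmem d).mp (by simp)
          simp [hc, hd] at hnd
      subst ht' hc
      obtain ⟨r, hr⟩ := ht
      rw [← hr]; rfl
  · intro h
    match p, h with
    | c :: p', h =>
      have hc : c = v₀ := by simpa using h
      exact ⟨[c], ⟨p', rfl⟩, by simp [hc]⟩

/-- Prefix with element-set p \ {v₀} iff last is v₀ (for v₀ ∈ p, p nodup). -/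
lemma prefix_all_but_iff {V : Type*} {p : List V} (hp : p.Nodup) {v₀ : V} (hv : v₀ ∈ p) :
    (∃ t, t <+: p ∧ ∀ v, v ∈ t ↔ (v ∈ p ∧ v ≠ v₀)) ↔ p.getLast? = some v₀ := by
  constructor
  · rintro ⟨t, ⟨r, hr⟩, hmem⟩
    subst hr
    have hv₀t : v₀ ∉ t := fun h => ((hmem v₀).mp h).2 rfl
    have hrall : ∀ x ∈ r, x = v₀ := by
      intro x hx
      by_contra hne
      have hxt : x ∈ t := (hmem x).mpr ⟨by simp [hx], hne⟩
      exact (List.disjoint_of_nodup_append hp) hxt hx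
    have hrnd : r.Nodup := (List.nodup_append.mp hp).2.1
    have hv₀r : v₀ ∈ r := by
      rcases List.mem_append.mp hv with h | h
      · exact absurd h hv₀t
      · exact h
    have : r = [v₀] := by
      cases r with
      | nil => simp at hv₀r
      | cons a r' =>
        have ha : a = v₀ := hrall a (by simp)
        cases r' with
        | nil => simp [ha]
        | cons b r'' =>
          exfalso
          have hb : b = v₀ := hrall b (by simp)
          simp [ha, hb] at hrnd
    rw [this, List.getLast?_concat]
  · intro h
    have hne : p ≠ [] := by rintro rfl; simp at h
    have hl : p.getLast hne = v₀ := by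
      have := List.getLast?_eq_getLast hne
      rw [this] at h; exact Option.some_injective _ h
    have hsplit : p.dropLast ++ [v₀] = p := by
      rw [← hl]; exact List.dropLast_append_getLast hne
    refine ⟨p.dropLast, ⟨[v₀], hsplit⟩, fun v => ?_⟩
    have hnd2 : (p.dropLast ++ [v₀]).Nodup := by rw [hsplit]; exact hp
    have hdisj := List.disjoint_of_nodup_append hnd2
    constructor
    · intro hvt
      refine ⟨by rw [← hsplit]; exact List.mem_append_left _ hvt, ?_⟩
      rintro rfl
      exact hdisj hvt (by simp)
    · rintro ⟨hvp, hvne⟩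
      rw [← hsplit] at hvp
      rcases List.mem_append.mp hvp with h | h
      · exact h
      · simp at h; exact absurd h hvne

end Stmt4A

namespace Stmt4A

lemma bool_eq_of_ne_of_ne {a b c : Bool} (h1 : a ≠ b) (h2 : a ≠ c) : b = c := by
  revert h1 h2; cases a <;> cases b <;> cases c <;> simp

variable {V : Type} [DecidableEq V]

/-- Hitting τ on the outgoing walk. -/
lemma hit_out {s γ τ : V → Bool} {v₀ : V} (hv : ∀ v, s v ≠ τ v ↔ v = v₀)
    {p : List V} (hpnd : p.Nodup) (hpm : ∀ v, v ∈ p ↔ s v ≠ γ v) :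
    τ ∈ flipSeq s γ p ↔ p.head? = some v₀ := by
  rw [flipSeq, mem_scanl, ← prefix_singleton_iff hpnd v₀]
  apply exists_congr; intro t
  apply and_congr_right; intro ht
  have hts : ∀ v ∈ t, v ∈ p := fun v hvt => ht.sublist.mem hvt
  rw [funext_iff]
  constructor
  · intro h v
    have hv' := h v
    rw [foldl_update] at hv'
    constructor
    · intro hvt
      rw [if_pos hvt] at hv'
      have : s v ≠ γ v := (hpm v).mp (hts v hvt)
      exact (hv v).mp (by rw [hv']; exact this)
    · rintro rfl
      by_contra hvn
      rw [if_neg hvn] at hv'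
      exact ((hv v).mpr rfl) hv'.symm
  · intro h v
    rw [foldl_update]
    by_cases hvt : v ∈ t
    · rw [if_pos hvt]
      have hvv : v = v₀ := (h v).mp hvt
      have h1 : s v ≠ γ v := (hpm v).mp (hts v hvt)
      have h2 : s v ≠ τ v := (hv v).mpr hvv
      exact (bool_eq_of_ne_of_ne h2 h1)
    · rw [if_neg hvt]
      have hne : v ≠ v₀ := fun hh => hvt ((h v).mpr hh)
      have h2 : s v = τ v := not_not.mp (fun hh => hne ((hv v).mp hh))
      exact h2.symm

/-- Hitting τ on the returning walk. -/
lemma hit_back {s γ τ : V → Bool} {v₀ : V} (hv : ∀ v, s v ≠ τ v ↔ v = v₀)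
    {p : List V} (hpnd : p.Nodup) (hpm : ∀ v, v ∈ p ↔ s v ≠ γ v) :
    τ ∈ flipSeq γ s p ↔ p.getLast? = some v₀ := by
  by_cases hv₀ : v₀ ∈ p
  · rw [flipSeq, mem_scanl, ← prefix_all_but_iff hpnd hv₀]
    apply exists_congr; intro t
    apply and_congr_right; intro ht
    have hts : ∀ v ∈ t, v ∈ p := fun v hvt => ht.sublist.mem hvt
    rw [funext_iff]
    constructor
    · intro h v
      have hv' := h v
      rw [foldl_update] at hv'
      constructor
      · intro hvt
        refine ⟨hts v hvt, ?_⟩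
        rintro rfl
        rw [if_pos hvt] at hv'
        exact ((hv v).mpr rfl) hv'.symm
      · rintro ⟨hvp, hvne⟩
        by_contra hvt
        rw [if_neg hvt] at hv'
        have h1 : s v ≠ γ v := (hpm v).mp hvp
        have h2 : s v = τ v := not_not.mp (fun hh => hvne ((hv v).mp hh))
        rw [← h2] at hv'
        exact h1 hv'
    · intro h v
      rw [foldl_update]
      by_cases hvt : v ∈ t
      · rw [if_pos hvt]
        obtain ⟨hvp, hvne⟩ := (h v).mp hvt
        have h2 : s v = τ v := not_not.mp (fun hh => hvne ((hv v).mp hh))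
        exact h2.symm
      · rw [if_neg hvt]
        by_cases hvv : v = v₀
        · subst hvv
          have h1 : s v ≠ γ v := (hpm v).mp hv₀
          have h2 : s v ≠ τ v := (hv v).mpr rfl
          exact (bool_eq_of_ne_of_ne h2 h1)
        · have hvp : v ∉ p := fun hh => hvt ((h v).mpr ⟨hh, hvv⟩)
          have h1 : s v = γ v := not_not.mp (fun hh => hvp ((hpm v).mpr hh))
          have h2 : s v = τ v := not_not.mp (fun hh => hvv ((hv v).mp hh))
          rw [← h2]; exact h1
  · constructor
    · intro h
      exfalso
      rw [flipSeq, mem_scanl] at h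
      obtain ⟨t, ht, hfold⟩ := h
      have hv₀t : v₀ ∉ t := fun hh => hv₀ (ht.sublist.mem hh)
      have hc := congrFun hfold v₀
      rw [foldl_update, if_neg hv₀t] at hc
      have h1 : s v₀ = γ v₀ := not_not.mp (fun hh => hv₀ ((hpm v₀).mpr hh))
      exact ((hv v₀).mpr rfl) (by rw [hc, ← h1])
    · intro h
      exact absurd (List.mem_of_getLast? h) hv₀

/-- Counting permutations with a fixed head. -/
lemma card_perm_head (L : List V) (hL : L.Nodup) {v₀ : V} (hv₀ : v₀ ∈ L) :
    (L.permutations.toFinset.filter fun p => p.head? = some v₀).card =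
      (L.length - 1).factorial := by
  have himg : (L.permutations.toFinset.filter fun p => p.head? = some v₀) =
      Finset.image (fun q => v₀ :: q) (L.erase v₀).permutations.toFinset := by
    ext p
    simp only [Finset.mem_filter, List.mem_toFinset, List.mem_permutations, Finset.mem_image]
    constructor
    · rintro ⟨hperm, hhead⟩
      have hp : p = v₀ :: p.tail := List.eq_cons_of_mem_head? (by rw [hhead]; rfl)
      refine ⟨p.tail, ?_, hp.symm⟩
      have := hp ▸ hperm
      exact (List.cons_perm_iff_perm_erase.mp this).2
    · rintro ⟨q, hq, rfl⟩
      exact ⟨List.cons_perm_iff_perm_erase.mpr ⟨hv₀, hq⟩, rfl⟩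
  rw [himg, Finset.card_image_of_injective _ (fun a b h => by injection h),
    List.toFinset_card_of_nodup (List.nodup_permutations _ (hL.erase v₀)),
    List.length_permutations, List.length_erase_of_mem hv₀]

/-- Counting permutations with a fixed last element. -/
lemma card_perm_last (L : List V) (hL : L.Nodup) {v₀ : V} (hv₀ : v₀ ∈ L) :
    (L.permutations.toFinset.filter fun p => p.getLast? = some v₀).card =
      (L.length - 1).factorial := by
  have himg : (L.permutations.toFinset.filter fun p => p.getLast? = some v₀) =
      Finset.image List.reverse
        (L.permutations.toFinset.filter fun p => p.head? = some v₀) := by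
    ext p
    simp only [Finset.mem_filter, List.mem_toFinset, List.mem_permutations, Finset.mem_image]
    constructor
    · rintro ⟨hperm, hlast⟩
      exact ⟨p.reverse, ⟨(List.reverse_perm p).trans hperm,
        by rw [List.head?_reverse, hlast]⟩, List.reverse_reverse p⟩
    · rintro ⟨q, ⟨hperm, hhead⟩, rfl⟩
      exact ⟨(List.reverse_perm q).trans hperm, by rw [List.getLast?_reverse, hhead]⟩
  rw [himg, Finset.card_image_of_injective _ List.reverse_injective]
  exact card_perm_head L hL hv₀

end Stmt4A

namespace Stmt4A

variable {V : Type} [DecidableEq V]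

/-- Extracting the unique falsifying assignment τ and pivot variable v₀. -/
lemma clause_char [Fintype V] (C : Clause V) (hw : C.length = Fintype.card V)
    (hnd : (C.map Prod.fst).Nodup) (s : V → Bool)
    (hs : (C.filter fun l => s l.1 == l.2).length = 1) :
    ∃ τ : V → Bool, ∃ v₀ : V,
      (∀ α : V → Bool, satClause α C = true ↔ α ≠ τ) ∧ (∀ v, s v ≠ τ v ↔ v = v₀) := by
  classical
  have hcard : (C.map Prod.fst).toFinset = Finset.univ := by
    apply Finset.eq_univ_of_card
    rw [List.toFinset_card_of_nodup hnd, List.length_map, hw]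
  have hmem : ∀ v : V, ∃ l, l ∈ C ∧ l.1 = v := by
    intro v
    have : v ∈ (C.map Prod.fst).toFinset := hcard ▸ Finset.mem_univ v
    rw [List.mem_toFinset, List.mem_map] at this
    exact this
  have hinj := List.inj_on_of_nodup_map hnd
  set b : V → Bool := fun v => (hmem v).choose.2 with hb
  have hb1 : ∀ v, (v, b v) ∈ C := by
    intro v
    have h1 := (hmem v).choose_spec.1
    have h2 := (hmem v).choose_spec.2
    have heq : (v, b v) = (hmem v).choose := by
      rw [hb]; exact Prod.ext h2.symm rfl
    rw [heq]; exact h1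
  have hb2 : ∀ l ∈ C, l.2 = b l.1 := by
    intro l hl
    have h3 : l = (l.1, b l.1) := hinj hl (hb1 l.1) rfl
    exact (Prod.ext_iff.mp h3).2
  obtain ⟨l₀, hfe⟩ := List.length_eq_one_iff.mp hs
  have hl₀ : l₀ ∈ C ∧ (s l₀.1 == l₀.2) = true := by
    have : l₀ ∈ C.filter fun l => s l.1 == l.2 := by rw [hfe]; simp
    exact List.mem_filter.mp this
  have huniq : ∀ l ∈ C, s l.1 = l.2 → l = l₀ := by
    intro l hl hsl
    have : l ∈ C.filter fun l => s l.1 == l.2 :=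
      List.mem_filter.mpr ⟨hl, by simpa using hsl⟩
    rw [hfe] at this; simpa using this
  refine ⟨fun v => !(b v), l₀.1, fun α => ?_, fun v => ?_⟩
  · constructor
    · intro h hne
      rw [satClause, List.any_eq_true] at h
      obtain ⟨l, hl, hsatl⟩ := h
      have h1 : α l.1 = l.2 := by simpa using hsatl
      have hb' : α l.1 = b l.1 := h1.trans (hb2 l hl)
      have := congrFun hne l.1
      rw [hb'] at this
      simp at this
    · intro h
      rw [satClause, List.any_eq_true]
      have : ∃ v, α v ≠ !(b v) := by
        by_contra hc
        push_neg at hc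
        exact h (funext fun v => hc v)
      obtain ⟨v, hvne⟩ := this
      have hav : α v = b v := by revert hvne; cases α v <;> cases b v <;> simp
      exact ⟨(v, b v), hb1 v, by simpa using hav⟩
  · have hsb : s v ≠ !(b v) ↔ s v = b v := by cases s v <;> cases b v <;> simp
    rw [hsb]
    constructor
    · intro h
      have : (v, b v) = l₀ := huniq (v, b v) (hb1 v) h
      exact congrArg Prod.fst this
    · rintro rfl
      have h1 : s l₀.1 = l₀.2 := by simpa using hl₀.2
      exact h1.trans (hb2 l₀ hl₀.1)

/-- The per-γ success fraction. -/
lemma frac_val [Fintype V] (C : Clause V) (s γ τ : V → Bool) (v₀ : V)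
    (hsat : ∀ α : V → Bool, satClause α C = true ↔ α ≠ τ)
    (hv : ∀ v, s v ≠ τ v ↔ v = v₀) :
    (((orders s γ ×ˢ orders γ s).filter fun p =>
          (flipSeq s γ p.1 ++ flipSeq γ s p.2).all fun α => satClause α C).card : ℝ) /
        ((orders s γ ×ˢ orders γ s).card : ℝ) =
      if v₀ ∈ Finset.univ.filter (fun v => s v ≠ γ v) then
        ((((Finset.univ.filter (fun v => s v ≠ γ v)).card : ℝ) - 1) /
          ((Finset.univ.filter (fun v => s v ≠ γ v)).card : ℝ)) ^ 2
      else 1 := by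
  classical
  set D := Finset.univ.filter (fun v => s v ≠ γ v) with hD
  set L := D.toList with hLdef
  have hLnd : L.Nodup := Finset.nodup_toList D
  have hLm : ∀ v, v ∈ L ↔ s v ≠ γ v := by
    intro v; rw [hLdef, Finset.mem_toList, hD]; simp
  have horderseq : orders s γ = L.permutations.toFinset := rfl
  have horders2 : orders γ s = orders s γ := by
    have hfc : (Finset.univ.filter fun v => γ v ≠ s v) =
        (Finset.univ.filter fun v => s v ≠ γ v) :=
      Finset.filter_congr (fun v _ => ne_comm)
    unfold orders
    rw [hfc]
  have hpfacts : ∀ p ∈ orders s γ, p.Nodup ∧ ∀ v, v ∈ p ↔ s v ≠ γ v := by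
    intro p hp
    rw [horderseq, List.mem_toFinset, List.mem_permutations] at hp
    exact ⟨hp.nodup_iff.mpr hLnd, fun v => (hp.mem_iff).trans (hLm v)⟩
  have hcardL : L.length = D.card := Finset.length_toList D
  have hcardord : (orders s γ).card = (D.card).factorial := by
    rw [horderseq, List.toFinset_card_of_nodup (List.nodup_permutations _ hLnd),
      List.length_permutations, hcardL]
  -- rewrite the filter as a product of filters
  have hfeq : ((orders s γ ×ˢ orders γ s).filter fun p =>
        (flipSeq s γ p.1 ++ flipSeq γ s p.2).all fun α => satClause α C) =
      ((orders s γ).filter fun p => ¬(p.head? = some v₀)) ×ˢ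
        ((orders γ s).filter fun p => ¬(p.getLast? = some v₀)) := by
    rw [← Finset.filter_product]
    apply Finset.filter_congr
    rintro ⟨p₁, p₂⟩ hp
    rw [Finset.mem_product] at hp
    obtain ⟨h1nd, h1m⟩ := hpfacts p₁ hp.1
    obtain ⟨h2nd, h2m⟩ := hpfacts p₂ (horders2 ▸ hp.2)
    have hh1 : τ ∈ flipSeq s γ p₁ ↔ p₁.head? = some v₀ := hit_out hv h1nd h1m
    have hh2 : τ ∈ flipSeq γ s p₂ ↔ p₂.getLast? = some v₀ := hit_back hv h2nd h2m
    simp only [List.all_eq_true, List.mem_append]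
    constructor
    · intro h
      constructor
      · intro hc
        exact (hsat τ).mp (h τ (Or.inl (hh1.mpr hc))) rfl
      · intro hc
        exact (hsat τ).mp (h τ (Or.inr (hh2.mpr hc))) rfl
    · rintro ⟨ha, hb⟩ α hα
      rw [hsat]
      rintro rfl
      rcases hα with h | h
      · exact ha (hh1.mp h)
      · exact hb (hh2.mp h)
  have hfacpos : (0:ℝ) < ((D.card).factorial : ℝ) := by
    exact_mod_cast Nat.factorial_pos _
  by_cases hv₀ : v₀ ∈ D
  · rw [if_pos hv₀]
    have hv₀L : v₀ ∈ L := by rw [hLm]; simpa [hD] using hv₀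
    have hm1 : 1 ≤ D.card := Finset.card_pos.mpr ⟨v₀, hv₀⟩
    have hch : ((orders s γ).filter fun p => p.head? = some v₀).card =
        (D.card - 1).factorial := by
      rw [horderseq]
      rw [card_perm_head L hLnd hv₀L, hcardL]
    have hcl : ((orders γ s).filter fun p => p.getLast? = some v₀).card =
        (D.card - 1).factorial := by
      rw [horders2, horderseq]
      rw [card_perm_last L hLnd hv₀L, hcardL]
    have hfle : (D.card - 1).factorial ≤ (D.card).factorial :=
      Nat.factorial_le (Nat.sub_le _ _)
    have hcnh : ((orders s γ).filter fun p => ¬(p.head? = some v₀)).card =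
        (D.card).factorial - (D.card - 1).factorial := by
      rw [Finset.filter_not, Finset.card_sdiff_of_subset (Finset.filter_subset _ _), hch, hcardord]
    have hcnl : ((orders γ s).filter fun p => ¬(p.getLast? = some v₀)).card =
        (D.card).factorial - (D.card - 1).factorial := by
      rw [Finset.filter_not, Finset.card_sdiff_of_subset (Finset.filter_subset _ _), hcl,
        horders2, hcardord]
    rw [hfeq, Finset.card_product, hcnh, hcnl, Finset.card_product, horders2, hcardord]
    obtain ⟨n, hn⟩ : ∃ n, D.card = n + 1 := ⟨D.card - 1, (Nat.succ_pred_eq_of_pos hm1).symm⟩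
    rw [hn]
    simp only [Nat.add_sub_cancel]
    rw [Nat.factorial_succ]
    push_cast [Nat.sub_le, Nat.factorial_le, le_refl, Nat.le_mul_of_pos_left]
    have hfac : (0:ℝ) < (n.factorial : ℝ) := by exact_mod_cast Nat.factorial_pos n
    have hcast : (((n+1) * n.factorial - n.factorial : ℕ) : ℝ) =
        (n : ℝ) * (n.factorial : ℝ) := by
      rw [Nat.cast_sub (Nat.le_mul_of_pos_left _ (Nat.succ_pos n))]
      push_cast; ring
    rw [hcast]
    have hne : ((n:ℝ)+1) * (n.factorial:ℝ) ≠ 0 := by positivity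
    field_simp
    ring
  · rw [if_neg hv₀]
    have hempty1 : ((orders s γ).filter fun p => p.head? = some v₀) = ∅ := by
      apply Finset.filter_eq_empty_iff.mpr
      intro p hp
      obtain ⟨_, hm⟩ := hpfacts p hp
      intro hc
      have : v₀ ∈ p := List.mem_of_mem_head? (by rw [hc]; rfl)
      exact hv₀ (by rw [hD]; simp [(hm v₀).mp this])
    have hempty2 : ((orders γ s).filter fun p => p.getLast? = some v₀) = ∅ := by
      apply Finset.filter_eq_empty_iff.mpr
      intro p hp
      obtain ⟨_, hm⟩ := hpfacts p (horders2 ▸ hp)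
      intro hc
      have : v₀ ∈ p := List.mem_of_getLast? hc
      exact hv₀ (by rw [hD]; simp [(hm v₀).mp this])
    have h1 : ((orders s γ).filter fun p => ¬(p.head? = some v₀)) = orders s γ := by
      rw [Finset.filter_not, hempty1, Finset.sdiff_empty]
    have h2 : ((orders γ s).filter fun p => ¬(p.getLast? = some v₀)) = orders γ s := by
      rw [Finset.filter_not, hempty2, Finset.sdiff_empty]
    rw [hfeq, h1, h2]
    apply div_self
    have : (0:ℝ) < ((orders s γ ×ˢ orders γ s).card : ℝ) := by
      rw [Finset.card_product, horders2, hcardord]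
      positivity
    exact ne_of_gt this

end Stmt4A

/-- If `s = e` is an assignment that makes exactly one literal of the
width-`k` clause `C` (over `k` distinct variables) true, then, with `K := k - 1`, the
probability that the random concatenated sequence `σ₁ ∘ σ₂` (through a uniformly random `γ`)
satisfies `C` equals `∑_{j=0}^{K} (1/2)·(C(K,j)/2^K)·[(j/(j+1))² + 1]`, and this quantity is
at least `1 - 2/k`. -/
theorem stmt4 {k : ℕ} (hk : 3 ≤ k) (C : Clause (Fin k))
    (hw : C.length = k) (hnd : (C.map Prod.fst).Nodup)
    (s : Fin k → Bool)
    (hs : (C.filter fun l => s l.1 == l.2).length = 1) :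
    probSatPair C s s =
      ∑ j ∈ Finset.range (k - 1 + 1),
        (1 / 2 : ℝ) * (((k - 1).choose j : ℝ) / 2 ^ (k - 1)) *
          (((j : ℝ) / ((j : ℝ) + 1)) ^ 2 + 1) ∧
    1 - 2 / (k : ℝ) ≤ probSatPair C s s := by
  classical
  obtain ⟨τ, v₀, hsat, hv⟩ :=
    Stmt4A.clause_char C (by simpa using hw) hnd s hs
  have hk0 : 0 < k := by omega
  set K := k - 1 with hK
  have hkK : k = K + 1 := by omega
  set F : Finset (Fin k) → ℝ := fun T =>
    if v₀ ∈ T then (((T.card : ℝ) - 1) / (T.card : ℝ)) ^ 2 else 1 with hF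
  -- step 1: rewrite probSatPair via frac_val
  have h1 : probSatPair C s s =
      (∑ γ : Fin k → Bool, F (Finset.univ.filter fun v => s v ≠ γ v)) / 2 ^ k := by
    rw [probSatPair]
    congr 1
    apply Finset.sum_congr rfl
    intro γ _
    exact Stmt4A.frac_val C s γ τ v₀ hsat hv
  -- step 2: reindex by the difference set
  have hflip : ∀ a c : Bool, a ≠ c ↔ c = !a := by decide
  let e : (Fin k → Bool) ≃ Finset (Fin k) :=
    { toFun := fun γ => Finset.univ.filter fun v => s v ≠ γ v
      invFun := fun T v => if v ∈ T then !(s v) else s v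
      left_inv := by
        intro γ
        funext v
        show (if v ∈ Finset.filter (fun u => s u ≠ γ u) Finset.univ
            then !(s v) else s v) = γ v
        by_cases h : s v ≠ γ v
        · rw [if_pos (Finset.mem_filter.mpr ⟨Finset.mem_univ v, h⟩)]
          exact ((hflip (s v) (γ v)).mp h).symm
        · rw [if_neg (show v ∉ Finset.filter (fun u => s u ≠ γ u) Finset.univ from
              fun hc => h (Finset.mem_filter.mp hc).2)]
          exact not_not.mp h
      right_inv := by
        intro T
        ext v
        by_cases h : v ∈ T <;> simp [h] }
  have h2 : (∑ γ : Fin k → Bool, F (Finset.univ.filter fun v => s v ≠ γ v)) =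
      ∑ T : Finset (Fin k), F T := e.sum_comp F
  -- step 3: evaluate the sum over all subsets
  set U : Finset (Fin k) := Finset.univ.erase v₀ with hU
  have hv₀U : v₀ ∉ U := Finset.notMem_erase _ _
  have hUcard : U.card = K := by
    rw [hU, Finset.card_erase_of_mem (Finset.mem_univ _), Finset.card_univ,
      Fintype.card_fin]
  have h3 : (∑ T : Finset (Fin k), F T) =
      2 ^ K + ∑ j ∈ Finset.range (K + 1),
        (K.choose j : ℝ) * (((j : ℝ) / ((j : ℝ) + 1)) ^ 2) := by
    rw [← Finset.powerset_univ, ← Finset.insert_erase (Finset.mem_univ v₀), ← hU,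
      Finset.sum_powerset_insert hv₀U]
    have hA : ∑ T ∈ U.powerset, F T = 2 ^ K := by
      have : ∀ T ∈ U.powerset, F T = 1 := by
        intro T hT
        rw [hF]
        have : v₀ ∉ T := fun hh => hv₀U (Finset.mem_powerset.mp hT hh)
        simp [this]
      rw [Finset.sum_congr rfl this, Finset.sum_const, Finset.card_powerset, hUcard]
      simp
    have hB : ∑ T ∈ U.powerset, F (insert v₀ T) =
        ∑ j ∈ Finset.range (K + 1),
          (K.choose j : ℝ) * (((j : ℝ) / ((j : ℝ) + 1)) ^ 2) := by
      have hstep : ∀ T ∈ U.powerset, F (insert v₀ T) =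
          (fun j : ℕ => (((j : ℝ) / ((j : ℝ) + 1)) ^ 2)) T.card := by
        intro T hT
        have hvT : v₀ ∉ T := fun hh => hv₀U (Finset.mem_powerset.mp hT hh)
        rw [hF]
        simp only [Finset.mem_insert_self, if_pos]
        rw [Finset.card_insert_of_notMem hvT]
        push_cast
        ring_nf
      rw [Finset.sum_congr rfl hstep,
        Finset.sum_powerset_apply_card (fun j : ℕ => (((j : ℝ) / ((j : ℝ) + 1)) ^ 2)),
        hUcard]
      apply Finset.sum_congr rfl
      intro j _
      rw [nsmul_eq_mul]
    rw [hA, hB]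
  -- the key closed form
  have hchosum : ∑ j ∈ Finset.range (K + 1), ((K.choose j : ℕ) : ℝ) = 2 ^ K := by
    exact_mod_cast Nat.sum_range_choose K
  set S₂ : ℝ := ∑ j ∈ Finset.range (K + 1),
      (K.choose j : ℝ) * (((j : ℝ) / ((j : ℝ) + 1)) ^ 2) with hS₂
  have hprob : probSatPair C s s = (2 ^ K + S₂) / 2 ^ (K + 1) := by
    rw [h1, h2, h3, hkK]
  have htwoK : (0:ℝ) < 2 ^ K := by positivity
  have heq : probSatPair C s s =
      ∑ j ∈ Finset.range (K + 1),
        (1 / 2 : ℝ) * ((K.choose j : ℝ) / 2 ^ K) *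
          (((j : ℝ) / ((j : ℝ) + 1)) ^ 2 + 1) := by
    rw [hprob]
    have : ∑ j ∈ Finset.range (K + 1),
        (1 / 2 : ℝ) * ((K.choose j : ℝ) / 2 ^ K) *
          (((j : ℝ) / ((j : ℝ) + 1)) ^ 2 + 1) =
        ∑ j ∈ Finset.range (K + 1),
          ((K.choose j : ℝ) * (((j : ℝ) / ((j : ℝ) + 1)) ^ 2) / 2 ^ (K + 1) +
            (K.choose j : ℝ) / 2 ^ (K + 1)) := by
      apply Finset.sum_congr rfl
      intro j _
      rw [pow_succ]
      ring
    rw [this, Finset.sum_add_distrib, ← Finset.sum_div, ← Finset.sum_div, ← hS₂, hchosum]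
    ring
  constructor
  · exact heq
  · -- the lower bound
    rw [heq]
    -- termwise bound
    have hterm : ∀ j ∈ Finset.range (K + 1),
        (K.choose j : ℝ) / 2 ^ K - (K.choose j : ℝ) / (2 ^ K * ((j : ℝ) + 1)) ≤
          (1 / 2 : ℝ) * ((K.choose j : ℝ) / 2 ^ K) *
            (((j : ℝ) / ((j : ℝ) + 1)) ^ 2 + 1) := by
      intro j _
      have hx1 : (0:ℝ) < (j : ℝ) + 1 := by positivity
      have hx1' : ((j : ℝ) + 1) ≠ 0 := ne_of_gt hx1
      have hc0 : (0:ℝ) ≤ (K.choose j : ℝ) / 2 ^ K := by positivity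
      have hkey : 1 - 1 / ((j : ℝ) + 1) ≤
          (1 / 2 : ℝ) * (((j : ℝ) / ((j : ℝ) + 1)) ^ 2 + 1) := by
        have hxt : (j : ℝ) / ((j : ℝ) + 1) = 1 - 1 / ((j : ℝ) + 1) := by
          field_simp
          ring
        rw [hxt]
        nlinarith [sq_nonneg (1 / ((j : ℝ) + 1))]
      have hrw : (K.choose j : ℝ) / 2 ^ K - (K.choose j : ℝ) / (2 ^ K * ((j : ℝ) + 1)) =
          ((K.choose j : ℝ) / 2 ^ K) * (1 - 1 / ((j : ℝ) + 1)) := by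
        rw [mul_sub, mul_one, mul_one_div, div_div]
      have hrw2 : (1 / 2 : ℝ) * ((K.choose j : ℝ) / 2 ^ K) *
          (((j : ℝ) / ((j : ℝ) + 1)) ^ 2 + 1) =
          ((K.choose j : ℝ) / 2 ^ K) *
            ((1 / 2 : ℝ) * (((j : ℝ) / ((j : ℝ) + 1)) ^ 2 + 1)) := by ring
      rw [hrw, hrw2]
      exact mul_le_mul_of_nonneg_left hkey hc0
    have hsumge := Finset.sum_le_sum hterm
    -- evaluate the lower sum
    have hsplit : ∑ j ∈ Finset.range (K + 1),
        ((K.choose j : ℝ) / 2 ^ K - (K.choose j : ℝ) / (2 ^ K * ((j : ℝ) + 1))) =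
        1 - ∑ j ∈ Finset.range (K + 1), (K.choose j : ℝ) / (2 ^ K * ((j : ℝ) + 1)) := by
      rw [Finset.sum_sub_distrib, ← Finset.sum_div, hchosum,
        div_self (ne_of_gt htwoK)]
    -- bound A
    have hAval : ∑ j ∈ Finset.range (K + 1), (K.choose j : ℝ) / (2 ^ K * ((j : ℝ) + 1)) =
        (2 ^ (K + 1) - 1) / (2 ^ K * ((K : ℝ) + 1)) := by
      have hterm2 : ∀ j ∈ Finset.range (K + 1),
          (K.choose j : ℝ) / (2 ^ K * ((j : ℝ) + 1)) =
            (((K + 1).choose (j + 1) : ℕ) : ℝ) / (2 ^ K * ((K : ℝ) + 1)) := by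
        intro j _
        have hid := Nat.add_one_mul_choose_eq K j
        have hidr : ((K : ℝ) + 1) * (K.choose j : ℝ) =
            (((K + 1).choose (j + 1) : ℕ) : ℝ) * ((j : ℝ) + 1) := by
          exact_mod_cast hid
        have hj1 : (0:ℝ) < (j : ℝ) + 1 := by positivity
        have hK1 : (0:ℝ) < (K : ℝ) + 1 := by positivity
        rw [div_eq_div_iff (by positivity) (by positivity)]
        linear_combination (2:ℝ) ^ K * hidr
      rw [Finset.sum_congr rfl hterm2, ← Finset.sum_div]
      congr 1
      have hfull : ∑ i ∈ Finset.range (K + 2), (((K + 1).choose i : ℕ) : ℝ) =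
          2 ^ (K + 1) := by
        exact_mod_cast Nat.sum_range_choose (K + 1)
      have hsucc := Finset.sum_range_succ' (fun i => (((K + 1).choose i : ℕ) : ℝ)) (K + 1)
      rw [hfull] at hsucc
      simp only [Nat.choose_zero_right, Nat.cast_one] at hsucc
      linarith
    have hAle : (2 ^ (K + 1) - 1 : ℝ) / (2 ^ K * ((K : ℝ) + 1)) ≤ 2 / (k : ℝ) := by
      have hkr : ((k : ℝ)) = (K : ℝ) + 1 := by
        rw [hkK]; push_cast; ring
      rw [hkr]
      have hK1 : (0:ℝ) < (K : ℝ) + 1 := by positivity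
      rw [div_le_div_iff₀ (by positivity) (by positivity)]
      have : (2:ℝ) ^ (K + 1) = 2 * 2 ^ K := by rw [pow_succ]; ring
      nlinarith [htwoK]
    calc 1 - 2 / (k : ℝ)
        ≤ 1 - ∑ j ∈ Finset.range (K + 1), (K.choose j : ℝ) / (2 ^ K * ((j : ℝ) + 1)) := by
          rw [hAval]; linarith [hAle]
      _ = ∑ j ∈ Finset.range (K + 1),
            ((K.choose j : ℝ) / 2 ^ K - (K.choose j : ℝ) / (2 ^ K * ((j : ℝ) + 1))) := by
          rw [hsplit]
      _ ≤ _ := hsumge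
end
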